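/- arXiv:1912.00468 — 10 statements merged into one kernel-verified Lean document; each statement's English description precedes it below -/
import Mathlib

section
/- Let W be a symmetric positive semidefinite n×n matrix with nonnegative entries, p a nonnegative vector in ℝ^n, and c ≥ 0. Let N₀, N₁ ⊆ {1,…,n} be disjoint sets with N₀ ∪ N₁ ⊊ {1,…,n}, and assume χ_{N₁}ᵀ W χ_{N₁} ≤ c, where χ_S denotes the characteristic 0/1-vector of a set S. Let R = {1,…,n} \ (N₀ ∪ N₁), and define the matrix W̃ indexed by R via w̃_{ij} = w_{ij} for i ≠ j and w̃_{ii} = w_{ii} + 2·∑_{k∈N₁} w_{ik}, the vector p̃ as the restriction of p to R, and c̃ = c − χ_{N₁}ᵀ W χ_{N₁}. Then W̃ is positive semidefinite, and max{ pᵀx : xᵀWx ≤ c, x ∈ {0,1}ⁿ, x_i = 0 for all i ∈ N₀, x_i = 1 for all i ∈ N₁ } = pᵀχ_{N₁} + max{ p̃ᵀx̃ : x̃ᵀW̃x̃ ≤ c̃, x̃ ∈ {0,1}^R }. -/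
/-- The quadratic form `xᵀ W x`. -/
noncomputable def quadForm {ι : Type*} [Fintype ι] (W : Matrix ι ι ℝ) (x : ι → ℝ) : ℝ :=
  ∑ i, ∑ j, W i j * x i * x j

/-- The characteristic 0/1-vector of a set `S ⊆ {1,…,n}`. -/
noncomputable def charVec {n : ℕ} (S : Finset (Fin n)) : Fin n → ℝ :=
  fun i => if i ∈ S then 1 else 0

theorem stmt_0 {n : ℕ} (W : Matrix (Fin n) (Fin n) ℝ)
    (hpsd : W.PosSemidef) (hW : ∀ i j, 0 ≤ W i j)
    (p : Fin n → ℝ) (hp : ∀ i, 0 ≤ p i) (c : ℝ) (hc : 0 ≤ c)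
    (N₀ N₁ : Finset (Fin n)) (hdisj : Disjoint N₀ N₁)
    (hproper : N₀ ∪ N₁ ⊂ Finset.univ)
    (hfeas : quadForm W (charVec N₁) ≤ c)
    (R : Finset (Fin n)) (hR : R = Finset.univ \ (N₀ ∪ N₁))
    (tW : Matrix ↥R ↥R ℝ)
    (htW : ∀ i j : ↥R,
      tW i j = if i = j then W i.1 i.1 + 2 * ∑ k ∈ N₁, W i.1 k else W i.1 j.1)
    (tp : ↥R → ℝ) (htp : ∀ i : ↥R, tp i = p i.1)
    (tc : ℝ) (htc : tc = c - quadForm W (charVec N₁)) :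
    tW.PosSemidef ∧
    sSup {v : ℝ | ∃ x : Fin n → ℝ, (∀ i, x i = 0 ∨ x i = 1) ∧ quadForm W x ≤ c ∧
        (∀ i ∈ N₀, x i = 0) ∧ (∀ i ∈ N₁, x i = 1) ∧ v = ∑ i, p i * x i} =
      (∑ i ∈ N₁, p i) +
        sSup {v : ℝ | ∃ x : ↥R → ℝ, (∀ i, x i = 0 ∨ x i = 1) ∧ quadForm tW x ≤ tc ∧
          v = ∑ i, tp i * x i} := by
  -- Basic membership facts
  have hmemR : ∀ i : Fin n, i ∈ R ↔ i ∉ N₀ ∧ i ∉ N₁ := by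
    intro i; simp [hR]
  have hd1R : Disjoint N₁ R := by
    rw [Finset.disjoint_left]; intro a ha haR; exact ((hmemR a).1 haR).2 ha
  have hsymm : ∀ i j, W i j = W j i := by
    intro i j
    have h := congrFun (congrFun hpsd.1 i) j
    simpa [Matrix.conjTranspose_apply] using h.symm
  -- PSD part
  have hPSD : tW.PosSemidef := by
    have hsub : (W.submatrix (fun i : ↥R => i.1) (fun i : ↥R => i.1)).PosSemidef :=
      hpsd.submatrix _
    have hdiag : (Matrix.diagonal (fun i : ↥R => 2 * ∑ k ∈ N₁, W i.1 k)).PosSemidef := by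
      rw [Matrix.posSemidef_diagonal_iff]
      intro i
      have : (0:ℝ) ≤ ∑ k ∈ N₁, W i.1 k := Finset.sum_nonneg fun k _ => hW _ _
      linarith
    have heq : tW = W.submatrix (fun i : ↥R => i.1) (fun i : ↥R => i.1)
        + Matrix.diagonal (fun i : ↥R => 2 * ∑ k ∈ N₁, W i.1 k) := by
      ext i j
      rw [htW]
      by_cases h : i = j
      · subst h; simp [Matrix.diagonal_apply_eq, Matrix.submatrix_apply]
      · simp [h, Matrix.diagonal_apply_ne _ h, Matrix.submatrix_apply]
    rw [heq]; exact hsub.add hdiag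
  refine ⟨hPSD, ?_⟩
  -- quadratic form of the characteristic vector
  have h1 : quadForm W (charVec N₁) = ∑ i ∈ N₁, ∑ j ∈ N₁, W i j := by
    simp [quadForm, charVec, mul_ite, ite_mul, Finset.sum_ite_mem]
  -- Key computation lemma
  have key : ∀ x : Fin n → ℝ, (∀ i, x i = 0 ∨ x i = 1) → (∀ i ∈ N₀, x i = 0) →
      (∀ i ∈ N₁, x i = 1) →
      quadForm W x = quadForm W (charVec N₁) + quadForm tW (fun i : ↥R => x i.1) ∧
      (∑ i, p i * x i) = (∑ i ∈ N₁, p i) + ∑ i : ↥R, tp i * x i.1 := by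
    intro x hx01 hx0 hx1
    have hzero : ∀ j, j ∉ N₁ ∪ R → x j = 0 := by
      intro j hj
      apply hx0
      rcases Finset.mem_union.not.mp hj with h
      push_neg at h
      by_contra hj0
      exact h.2 ((hmemR j).2 ⟨hj0, h.1⟩)
    constructor
    · -- quadratic forms
      have h2 : quadForm tW (fun i : ↥R => x i.1)
          = (∑ i ∈ R, ∑ j ∈ R, W i j * x i * x j)
            + 2 * ∑ i ∈ R, (∑ k ∈ N₁, W i k) * x i := by
        unfold quadForm
        have hterm : ∀ i j : ↥R, tW i j * x i.1 * x j.1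
            = W i.1 j.1 * x i.1 * x j.1
              + (if i = j then 2 * (∑ k ∈ N₁, W i.1 k) * x i.1 else 0) := by
          intro i j
          rw [htW]
          by_cases h : i = j
          · subst h
            rcases hx01 i.1 with h | h <;> simp [h] <;> ring
          · simp [h]
        simp_rw [hterm, Finset.sum_add_distrib, Finset.sum_ite_eq, Finset.mem_univ, if_pos]
        rw [Finset.sum_coe_sort R (fun i => ∑ j : ↥R, W i (j:Fin n) * x i * x j)]
        congr 1
        · apply Finset.sum_congr rfl; intro i _
          exact Finset.sum_coe_sort R (fun j => W i j * x i * x j)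
        · rw [Finset.mul_sum, ← Finset.sum_coe_sort R (fun i => 2 * ((∑ k ∈ N₁, W i k) * x i))]
          apply Finset.sum_congr rfl; intro i _; ring
      have h3 : quadForm W x = ∑ i ∈ N₁ ∪ R, ∑ j ∈ N₁ ∪ R, W i j * x i * x j := by
        unfold quadForm
        have hin : ∀ i : Fin n, (∑ j, W i j * x i * x j) = ∑ j ∈ N₁ ∪ R, W i j * x i * x j := by
          intro i
          refine (Finset.sum_subset (Finset.subset_univ _) ?_).symm
          intro j _ hj; rw [hzero j hj]; ring
        simp_rw [hin]
        refine (Finset.sum_subset (Finset.subset_univ _) ?_).symm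
        intro i _ hi
        apply Finset.sum_eq_zero; intro j _; rw [hzero i hi]; ring
      have hA11 : ∑ i ∈ N₁, ∑ j ∈ N₁, W i j * x i * x j = ∑ i ∈ N₁, ∑ j ∈ N₁, W i j := by
        apply Finset.sum_congr rfl; intro i hi
        apply Finset.sum_congr rfl; intro j hj
        rw [hx1 i hi, hx1 j hj]; ring
      have hA1R : ∑ i ∈ N₁, ∑ j ∈ R, W i j * x i * x j = ∑ i ∈ R, (∑ k ∈ N₁, W i k) * x i := by
        rw [Finset.sum_comm]
        apply Finset.sum_congr rfl; intro j hj
        rw [Finset.sum_mul]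
        apply Finset.sum_congr rfl; intro i hi
        rw [hx1 i hi, hsymm i j]; ring
      have hAR1 : ∑ i ∈ R, ∑ j ∈ N₁, W i j * x i * x j = ∑ i ∈ R, (∑ k ∈ N₁, W i k) * x i := by
        apply Finset.sum_congr rfl; intro i hi
        rw [Finset.sum_mul]
        apply Finset.sum_congr rfl; intro j hj
        rw [hx1 j hj]; ring
      rw [h3, h2]
      simp_rw [Finset.sum_union hd1R, Finset.sum_add_distrib]
      rw [h1, hA11, hA1R, hAR1]
      ring
    · -- linear parts
      have : (∑ i, p i * x i) = ∑ i ∈ N₁ ∪ R, p i * x i := by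
        refine (Finset.sum_subset (Finset.subset_univ _) ?_).symm
        intro j _ hj
        rw [hzero j hj]; ring
      rw [this, Finset.sum_union hd1R]
      congr 1
      · apply Finset.sum_congr rfl
        intro i hi; rw [hx1 i hi, mul_one]
      · rw [← Finset.sum_coe_sort R (fun i => p i * x i)]
        apply Finset.sum_congr rfl
        intro i _
        rw [htp]
  set K := ∑ i ∈ N₁, p i with hK
  set S₂ := {v : ℝ | ∃ x : ↥R → ℝ, (∀ i, x i = 0 ∨ x i = 1) ∧ quadForm tW x ≤ tc ∧
      v = ∑ i, tp i * x i} with hS₂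
  have hne : S₂.Nonempty := by
    refine ⟨0, fun _ => 0, fun i => Or.inl rfl, ?_, by simp⟩
    have hz : quadForm tW (fun _ : ↥R => (0:ℝ)) = 0 := by simp [quadForm]
    rw [hz, htc]; linarith
  have hbdd : BddAbove S₂ := by
    refine ⟨∑ i : ↥R, tp i, ?_⟩
    rintro v ⟨x, h01, hq, rfl⟩
    apply Finset.sum_le_sum
    intro i _
    have hpi : (0:ℝ) ≤ tp i := by rw [htp]; exact hp _
    rcases h01 i with h | h <;> rw [h] <;> simp [hpi]
  have hset : {v : ℝ | ∃ x : Fin n → ℝ, (∀ i, x i = 0 ∨ x i = 1) ∧ quadForm W x ≤ c ∧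
      (∀ i ∈ N₀, x i = 0) ∧ (∀ i ∈ N₁, x i = 1) ∧ v = ∑ i, p i * x i}
      = (fun v => K + v) '' S₂ := by
    ext v
    simp only [hS₂, Set.mem_setOf_eq, Set.mem_image]
    constructor
    · rintro ⟨x, hx01, hxq, hx0, hx1, rfl⟩
      obtain ⟨hq, hs⟩ := key x hx01 hx0 hx1
      exact ⟨∑ i : ↥R, tp i * x i.1,
        ⟨fun i => x i.1, fun i => hx01 i.1, by rw [htc]; linarith, rfl⟩, hs.symm⟩
    · rintro ⟨w, ⟨y, hy01, hyq, rfl⟩, rfl⟩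
      set x : Fin n → ℝ := fun i => if i ∈ N₁ then 1 else if h : i ∈ R then y ⟨i, h⟩ else 0
        with hxdef
      have hx01 : ∀ i, x i = 0 ∨ x i = 1 := by
        intro i; by_cases h1 : i ∈ N₁
        · right; simp [hxdef, h1]
        · by_cases h2 : i ∈ R
          · simpa [hxdef, h1, h2] using hy01 ⟨i, h2⟩
          · left; simp [hxdef, h1, h2]
      have hx0 : ∀ i ∈ N₀, x i = 0 := by
        intro i hi
        have h1 : i ∉ N₁ := Finset.disjoint_left.mp hdisj hi
        have h2 : i ∉ R := fun hiR => ((hmemR i).1 hiR).1 hi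
        simp [hxdef, h1, h2]
      have hx1 : ∀ i ∈ N₁, x i = 1 := by intro i hi; simp [hxdef, hi]
      have hrestr : (fun i : ↥R => x i.1) = y := by
        funext i
        have h1 : i.1 ∉ N₁ := (Finset.disjoint_right.mp hd1R) i.2
        simp [hxdef, h1, i.2]
      have hrestr' : ∀ i : ↥R, x i.1 = y i := fun i => congrFun hrestr i
      obtain ⟨hq, hs⟩ := key x hx01 hx0 hx1
      refine ⟨x, hx01, ?_, hx0, hx1, ?_⟩
      · rw [hq, hrestr]; rw [htc] at hyq; linarith
      · rw [hs]; simp only [hrestr']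
  rw [hset]
  have hlub : IsLUB ((fun v => K + v) '' S₂) (K + sSup S₂) := by
    constructor
    · rintro w ⟨v, hv, rfl⟩
      exact add_le_add_right (le_csSup hbdd hv) K
    · intro b hb
      have h2 : sSup S₂ ≤ b - K := by
        apply csSup_le hne
        intro v hv
        have := hb (Set.mem_image_of_mem _ hv)
        linarith
      linarith
  exact hlub.csSup_eq (hne.image _)
end

section
/- Let W be a symmetric n×n matrix with nonnegative entries and strictly positive diagonal entries, let p be a nonnegative vector in ℝ^n, c ≥ 0, let d be the diagonal of W and D = diag(d). For every x ∈ [0,1]ⁿ satisfying xᵀ(W−D)x + dᵀx ≤ c there exists x̄ ∈ [0,1]ⁿ with x̄ᵀ(W−D)x̄ + dᵀx̄ ≤ c, pᵀx̄ ≥ pᵀx, and at most one index i with x̄_i ∉ {0,1}. -/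
private lemma sum_two {n : ℕ} (i j : Fin n) (hij : i ≠ j) (f : Fin n → ℝ) (a b : ℝ) :
    ∑ k, f k * (if k = i then a else if k = j then b else 0) = f i * a + f j * b := by
  have h : ∀ k : Fin n, f k * (if k = i then a else if k = j then b else 0)
      = (if k = i then f i * a else 0) + (if k = j then f j * b else 0) := by
    intro k
    by_cases h1 : k = i
    · subst h1; simp [hij]
    · by_cases h2 : k = j
      · subst h2; simp [h1]
      · simp [h1, h2]
  rw [Finset.sum_congr rfl fun k _ => h k, Finset.sum_add_distrib]
  simp

private lemma quad_expand {n : ℕ} (M : Matrix (Fin n) (Fin n) ℝ) (x v : Fin n → ℝ) (t : ℝ) :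
    quadForm M (fun k => x k + t * v k) =
      quadForm M x + t * (∑ k, ∑ m, M k m * (x k * v m + v k * x m)) + t ^ 2 * quadForm M v := by
  simp only [quadForm, Finset.mul_sum, ← Finset.sum_add_distrib]
  exact Finset.sum_congr rfl fun k _ => Finset.sum_congr rfl fun m _ => by ring

private lemma double_symm {n : ℕ} (M : Matrix (Fin n) (Fin n) ℝ) (hM : M.IsSymm) (x v : Fin n → ℝ) :
    ∑ k, ∑ m, M k m * v k * x m = ∑ k, ∑ m, M k m * x k * v m := by
  rw [Finset.sum_comm]
  exact Finset.sum_congr rfl fun k _ => Finset.sum_congr rfl fun m _ => by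
    rw [hM.apply k m]; ring

private lemma step {n : ℕ} (W : Matrix (Fin n) (Fin n) ℝ) (hsym : W.IsSymm)
    (hW : ∀ i j, 0 ≤ W i j) (hdiag : ∀ i, 0 < W i i)
    (p : Fin n → ℝ) (c : ℝ)
    (x : Fin n → ℝ) (hx : ∀ i, x i ∈ Set.Icc (0:ℝ) 1)
    (hfeas : quadForm (W - Matrix.diagonal (fun i => W i i)) x + (∑ i, W i i * x i) ≤ c)
    (i j : Fin n) (hij : i ≠ j)
    (hxi1 : x i ≠ 1) (hxj0 : x j ≠ 0)
    (hdir : p j * (2 * (∑ m, (W - Matrix.diagonal (fun i => W i i)) i m * x m) + W i i)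
          ≤ p i * (2 * (∑ m, (W - Matrix.diagonal (fun i => W i i)) j m * x m) + W j j)) :
    ∃ y : Fin n → ℝ, (∀ k, y k ∈ Set.Icc (0:ℝ) 1) ∧
      quadForm (W - Matrix.diagonal (fun i => W i i)) y + (∑ k, W k k * y k) ≤ c ∧
      (∑ k, p k * x k) ≤ (∑ k, p k * y k) ∧
      (∀ k, k ≠ i → k ≠ j → y k = x k) ∧ (y i = 1 ∨ y j = 0) := by
  classical
  set M := W - Matrix.diagonal (fun i => W i i) with hMdef
  have hMoff : ∀ k m, k ≠ m → M k m = W k m := by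
    intro k m h
    simp [hMdef, Matrix.sub_apply, Matrix.diagonal_apply_ne _ h]
  have hMdiag0 : ∀ k, M k k = 0 := by
    intro k; simp [hMdef, Matrix.sub_apply]
  have hMnn : ∀ k m, 0 ≤ M k m := by
    intro k m
    by_cases h : k = m
    · subst h; rw [hMdiag0]
    · rw [hMoff k m h]; exact hW k m
  have hMsym : M.IsSymm := hsym.sub (Matrix.isSymm_diagonal _)
  have hMsym' : ∀ a b, M a b = M b a := fun a b => hMsym.apply b a
  set S : Fin n → ℝ := fun k => ∑ m, M k m * x m with hSdef
  have hSnn : ∀ k, 0 ≤ S k := fun k =>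
    Finset.sum_nonneg fun m _ => mul_nonneg (hMnn k m) (hx m).1
  set A : Fin n → ℝ := fun k => 2 * S k + W k k with hAdef
  have hApos : ∀ k, 0 < A k := by
    intro k
    have h1 := hSnn k; have h2 := hdiag k
    simp only [hAdef]; linarith
  have hdir' : p j * A i ≤ p i * A j := by
    simp only [hAdef, hSdef]; exact hdir
  have hxiIcc := hx i; have hxjIcc := hx j
  set ε := min ((1 - x i) / A j) (x j / A i) with hεdef
  have hε0 : 0 ≤ ε := le_min (div_nonneg (by linarith [hxiIcc.2]) (hApos j).le)
    (div_nonneg hxjIcc.1 (hApos i).le)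
  have hεi : ε * A j ≤ 1 - x i := by
    have h := min_le_left ((1 - x i) / A j) (x j / A i)
    rw [← hεdef] at h
    calc ε * A j ≤ ((1 - x i) / A j) * A j := by
          exact mul_le_mul_of_nonneg_right h (hApos j).le
      _ = 1 - x i := div_mul_cancel₀ _ (hApos j).ne'
  have hεj : ε * A i ≤ x j := by
    have h := min_le_right ((1 - x i) / A j) (x j / A i)
    rw [← hεdef] at h
    calc ε * A i ≤ (x j / A i) * A i := mul_le_mul_of_nonneg_right h (hApos i).le
      _ = x j := div_mul_cancel₀ _ (hApos i).ne'
  set v : Fin n → ℝ := fun k => if k = i then A j else if k = j then -(A i) else 0 with hvdef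
  have hvi : v i = A j := by simp [hvdef]
  have hvj : v j = -(A i) := by simp [hvdef, hij.symm]
  have hvo : ∀ k, k ≠ i → k ≠ j → v k = 0 := by
    intro k h1 h2; simp [hvdef, h1, h2]
  have hvsum : ∀ f : Fin n → ℝ, ∑ k, f k * v k = f i * A j + f j * (-(A i)) := by
    intro f; simp only [hvdef]; exact sum_two i j hij f (A j) (-(A i))
  refine ⟨fun k => x k + ε * v k, ?_, ?_, ?_, ?_, ?_⟩
  · intro k
    by_cases h1 : k = i
    · subst h1
      show x k + ε * v k ∈ Set.Icc (0:ℝ) 1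
      rw [hvi]
      constructor
      · have := mul_nonneg hε0 (hApos j).le; linarith [hxiIcc.1]
      · linarith [hεi]
    · by_cases h2 : k = j
      · subst h2
        show x k + ε * v k ∈ Set.Icc (0:ℝ) 1
        rw [hvj]
        constructor
        · have : ε * A i ≤ x k := hεj; linarith
        · have := mul_nonneg hε0 (hApos i).le; linarith [hxjIcc.2]
      · show x k + ε * v k ∈ Set.Icc (0:ℝ) 1
        rw [hvo k h1 h2]; simpa using hx k
  · -- feasibility
    have hquad := quad_expand M x v ε
    have hlinW : ∑ k, W k k * (x k + ε * v k) = (∑ k, W k k * x k) + ε * ∑ k, W k k * v k := by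
      rw [Finset.mul_sum, ← Finset.sum_add_distrib]
      exact Finset.sum_congr rfl fun k _ => by ring
    have ecol : ∀ q : Fin n, (∑ k, M k q * x k) = S q := by
      intro q
      simp only [hSdef]
      exact Finset.sum_congr rfl fun k _ => by rw [hMsym' k q]
    have hdouble : (∑ k, ∑ m, M k m * (x k * v m + v k * x m)) = 2 * (S i * A j - S j * A i) := by
      have h1 : (∑ k, ∑ m, M k m * (x k * v m + v k * x m))
          = (∑ k, ∑ m, M k m * x k * v m) + (∑ k, ∑ m, M k m * v k * x m) := by
        rw [← Finset.sum_add_distrib]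
        refine Finset.sum_congr rfl fun k _ => ?_
        rw [← Finset.sum_add_distrib]
        exact Finset.sum_congr rfl fun m _ => by ring
      have h3 : (∑ k, ∑ m, M k m * x k * v m) = S i * A j - S j * A i := by
        have hcol : ∀ k, (∑ m, M k m * x k * v m)
            = M k i * x k * A j + M k j * x k * (-(A i)) := by
          intro k
          simp only [hvdef]
          exact sum_two i j hij (fun m => M k m * x k) (A j) (-(A i))
        rw [Finset.sum_congr rfl fun k _ => hcol k, Finset.sum_add_distrib,
          ← Finset.sum_mul, ← Finset.sum_mul, ecol i, ecol j]
        ring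
      rw [h1, double_symm M hMsym x v, h3]; ring
    have hQ : quadForm M v = -(2 * M i j * (A i * A j)) := by
      simp only [quadForm, hvdef]
      have hcol : ∀ k, (∑ m, M k m * (if k = i then A j else if k = j then -(A i) else 0)
            * (if m = i then A j else if m = j then -(A i) else 0))
          = M k i * (if k = i then A j else if k = j then -(A i) else 0) * A j
            + M k j * (if k = i then A j else if k = j then -(A i) else 0) * (-(A i)) :=
        fun k => sum_two i j hij _ (A j) (-(A i))
      rw [Finset.sum_congr rfl fun k _ => hcol k, Finset.sum_add_distrib,
        ← Finset.sum_mul, ← Finset.sum_mul,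
        sum_two i j hij (fun k => M k i) _ _, sum_two i j hij (fun k => M k j) _ _,
        hMdiag0 i, hMdiag0 j, hMsym' j i]
      ring
    have hcancel : ε * (2 * (S i * A j - S j * A i)) + ε * (W i i * A j + W j j * (-(A i))) = 0 := by
      simp only [hAdef]; ring
    have hQ0 : 0 ≤ 2 * M i j * (A i * A j) :=
      mul_nonneg (mul_nonneg (by norm_num) (hMnn i j)) (mul_nonneg (hApos i).le (hApos j).le)
    show quadForm M (fun k => x k + ε * v k) + (∑ k, W k k * (x k + ε * v k)) ≤ c
    rw [hquad, hlinW, hvsum (fun k => W k k), hdouble, hQ]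
    have hsq := mul_nonneg (sq_nonneg ε) hQ0
    linarith [hfeas, hcancel, hsq]
  · show (∑ k, p k * x k) ≤ ∑ k, p k * (x k + ε * v k)
    have hlinp : ∑ k, p k * (x k + ε * v k) = (∑ k, p k * x k) + ε * ∑ k, p k * v k := by
      rw [Finset.mul_sum, ← Finset.sum_add_distrib]
      exact Finset.sum_congr rfl fun k _ => by ring
    rw [hlinp, hvsum p]
    have : 0 ≤ ε * (p i * A j + p j * (-(A i))) :=
      mul_nonneg hε0 (by linarith [hdir'])
    linarith
  · intro k h1 h2
    show x k + ε * v k = x k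
    rw [hvo k h1 h2]; ring
  · rcases min_choice ((1 - x i) / A j) (x j / A i) with h | h
    · left
      show x i + ε * v i = 1
      rw [hvi, hεdef, h, div_mul_cancel₀ _ (hApos j).ne']
      ring
    · right
      show x j + ε * v j = 0
      rw [hvj, hεdef, h, mul_neg, div_mul_cancel₀ _ (hApos i).ne']
      ring

theorem stmt_1 {n : ℕ} (W : Matrix (Fin n) (Fin n) ℝ) (hsym : W.IsSymm)
    (hW : ∀ i j, 0 ≤ W i j) (hdiag : ∀ i, 0 < W i i)
    (p : Fin n → ℝ) (hp : ∀ i, 0 ≤ p i) (c : ℝ) (hc : 0 ≤ c)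
    (x : Fin n → ℝ) (hx : ∀ i, x i ∈ Set.Icc (0:ℝ) 1)
    (hfeas : quadForm (W - Matrix.diagonal (fun i => W i i)) x + (∑ i, W i i * x i) ≤ c) :
    ∃ y : Fin n → ℝ, (∀ i, y i ∈ Set.Icc (0:ℝ) 1) ∧
      quadForm (W - Matrix.diagonal (fun i => W i i)) y + (∑ i, W i i * y i) ≤ c ∧
      (∑ i, p i * x i) ≤ (∑ i, p i * y i) ∧
      {i : Fin n | y i ≠ 0 ∧ y i ≠ 1}.Subsingleton := by
  classical
  have key : ∀ N : ℕ, ∀ x : Fin n → ℝ,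
      (Finset.univ.filter (fun i => x i ≠ 0 ∧ x i ≠ 1)).card ≤ N →
      (∀ i, x i ∈ Set.Icc (0:ℝ) 1) →
      quadForm (W - Matrix.diagonal (fun i => W i i)) x + (∑ i, W i i * x i) ≤ c →
      ∃ y : Fin n → ℝ, (∀ i, y i ∈ Set.Icc (0:ℝ) 1) ∧
        quadForm (W - Matrix.diagonal (fun i => W i i)) y + (∑ i, W i i * y i) ≤ c ∧
        (∑ i, p i * x i) ≤ (∑ i, p i * y i) ∧
        {i : Fin n | y i ≠ 0 ∧ y i ≠ 1}.Subsingleton := by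
    intro N
    induction N with
    | zero =>
      intro x hcard hbox hf
      refine ⟨x, hbox, hf, le_rfl, ?_⟩
      intro a ha b hb
      have ha' : a ∈ Finset.univ.filter (fun i => x i ≠ 0 ∧ x i ≠ 1) := by
        simp only [Finset.mem_filter, Finset.mem_univ, true_and]; exact ha
      rw [Finset.card_eq_zero.mp (Nat.le_zero.mp hcard)] at ha'
      exact absurd ha' (Finset.notMem_empty a)
    | succ N ih =>
      intro x hcard hbox hf
      by_cases hle : (Finset.univ.filter (fun i => x i ≠ 0 ∧ x i ≠ 1)).card ≤ 1
      · refine ⟨x, hbox, hf, le_rfl, ?_⟩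
        intro a ha b hb
        have ha' : a ∈ Finset.univ.filter (fun i => x i ≠ 0 ∧ x i ≠ 1) := by
          simp only [Finset.mem_filter, Finset.mem_univ, true_and]; exact ha
        have hb' : b ∈ Finset.univ.filter (fun i => x i ≠ 0 ∧ x i ≠ 1) := by
          simp only [Finset.mem_filter, Finset.mem_univ, true_and]; exact hb
        exact Finset.card_le_one.mp hle a ha' b hb'
      · push_neg at hle
        obtain ⟨i, hi, j, hj, hij⟩ := Finset.one_lt_card.mp hle
        simp only [Finset.mem_filter, Finset.mem_univ, true_and] at hi hj
        have cardstep : ∀ (y : Fin n → ℝ) (a b : Fin n),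
            (x a ≠ 0 ∧ x a ≠ 1) → (x b ≠ 0 ∧ x b ≠ 1) →
            (∀ k, k ≠ a → k ≠ b → y k = x k) → (y a = 1 ∨ y b = 0) →
            (Finset.univ.filter (fun k => y k ≠ 0 ∧ y k ≠ 1)).card ≤ N := by
          intro y a b ha hb hyout hyio
          rcases hyio with h1 | h1
          · have hsubset : Finset.univ.filter (fun k => y k ≠ 0 ∧ y k ≠ 1)
                ⊆ (Finset.univ.filter (fun k => x k ≠ 0 ∧ x k ≠ 1)).erase a := by
              intro k hk
              simp only [Finset.mem_filter, Finset.mem_univ, true_and] at hk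
              have hka : k ≠ a := fun h => hk.2 (h ▸ h1)
              rw [Finset.mem_erase]
              refine ⟨hka, ?_⟩
              simp only [Finset.mem_filter, Finset.mem_univ, true_and]
              by_cases hkb : k = b
              · subst hkb; exact hb
              · rw [← hyout k hka hkb]; exact hk
            have hma : a ∈ Finset.univ.filter (fun k => x k ≠ 0 ∧ x k ≠ 1) := by
              simp only [Finset.mem_filter, Finset.mem_univ, true_and]; exact ha
            have := Finset.card_le_card hsubset
            rw [Finset.card_erase_of_mem hma] at this
            omega
          · have hsubset : Finset.univ.filter (fun k => y k ≠ 0 ∧ y k ≠ 1)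
                ⊆ (Finset.univ.filter (fun k => x k ≠ 0 ∧ x k ≠ 1)).erase b := by
              intro k hk
              simp only [Finset.mem_filter, Finset.mem_univ, true_and] at hk
              have hkb : k ≠ b := fun h => hk.1 (h ▸ h1)
              rw [Finset.mem_erase]
              refine ⟨hkb, ?_⟩
              simp only [Finset.mem_filter, Finset.mem_univ, true_and]
              by_cases hka : k = a
              · subst hka; exact ha
              · rw [← hyout k hka hkb]; exact hk
            have hmb : b ∈ Finset.univ.filter (fun k => x k ≠ 0 ∧ x k ≠ 1) := by
              simp only [Finset.mem_filter, Finset.mem_univ, true_and]; exact hb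
            have := Finset.card_le_card hsubset
            rw [Finset.card_erase_of_mem hmb] at this
            omega
        rcases le_total
            (p j * (2 * (∑ m, (W - Matrix.diagonal (fun i => W i i)) i m * x m) + W i i))
            (p i * (2 * (∑ m, (W - Matrix.diagonal (fun i => W i i)) j m * x m) + W j j))
            with hd | hd
        · obtain ⟨y, hybox, hyfeas, hyp, hyout, hyio⟩ :=
            step W hsym hW hdiag p c x hbox hf i j hij hi.2 hj.1 hd
          obtain ⟨z, hz1, hz2, hz3, hz4⟩ :=
            ih y (cardstep y i j hi hj hyout hyio) hybox hyfeas
          exact ⟨z, hz1, hz2, le_trans hyp hz3, hz4⟩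
        · obtain ⟨y, hybox, hyfeas, hyp, hyout, hyio⟩ :=
            step W hsym hW hdiag p c x hbox hf j i hij.symm hj.2 hi.1 hd
          obtain ⟨z, hz1, hz2, hz3, hz4⟩ :=
            ih y (cardstep y j i hj hi hyout hyio) hybox hyfeas
          exact ⟨z, hz1, hz2, le_trans hyp hz3, hz4⟩
  exact key (Finset.univ.filter (fun i => x i ≠ 0 ∧ x i ≠ 1)).card x le_rfl hx hfeas
end

section
/- Let W be a symmetric n×n matrix with nonnegative diagonal d, D = diag(d), c ≥ 0, and let φ = (√5 − 1)/2. If y ∈ [0,1]ⁿ satisfies yᵀWy ≤ c and dᵀy ≤ c, then the scaled vector φ·y satisfies (φy)ᵀ(W−D)(φy) + dᵀ(φy) ≤ c. -/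
theorem stmt_2 {n : ℕ} (W : Matrix (Fin n) (Fin n) ℝ) (hsym : W.IsSymm)
    (hd : ∀ i, 0 ≤ W i i) (c : ℝ) (hc : 0 ≤ c)
    (φ : ℝ) (hφ : φ = (Real.sqrt 5 - 1) / 2)
    (y : Fin n → ℝ) (hy : ∀ i, y i ∈ Set.Icc (0:ℝ) 1)
    (h1 : quadForm W y ≤ c) (h2 : (∑ i, W i i * y i) ≤ c) :
    quadForm (W - Matrix.diagonal (fun i => W i i)) (fun i => φ * y i) +
      (∑ i, W i i * (φ * y i)) ≤ c := by
  have h5 : Real.sqrt 5 ^ 2 = 5 := Real.sq_sqrt (by norm_num)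
  have h5nn : 0 ≤ Real.sqrt 5 := Real.sqrt_nonneg 5
  have hphi2 : φ ^ 2 + φ = 1 := by rw [hφ]; nlinarith
  have hphinn : 0 ≤ φ := by rw [hφ]; nlinarith
  have hexp : quadForm (W - Matrix.diagonal (fun i => W i i)) (fun i => φ * y i)
      = φ ^ 2 * quadForm W y - φ ^ 2 * ∑ i, W i i * y i ^ 2 := by
    unfold quadForm
    rw [Finset.mul_sum, Finset.mul_sum, ← Finset.sum_sub_distrib]
    apply Finset.sum_congr rfl
    intro i _
    simp only [Matrix.sub_apply, Matrix.diagonal_apply, sub_mul, Finset.sum_sub_distrib,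
      ite_mul, zero_mul, Finset.sum_ite_eq, Finset.mem_univ, if_true]
    rw [Finset.mul_sum]
    congr 1
    · exact Finset.sum_congr rfl fun j _ => by ring
    · ring
  have hsum : (∑ i, W i i * (φ * y i)) = φ * ∑ i, W i i * y i := by
    rw [Finset.mul_sum]; apply Finset.sum_congr rfl; intro i _; ring
  have hS2 : 0 ≤ ∑ i, W i i * y i ^ 2 :=
    Finset.sum_nonneg fun i _ => mul_nonneg (hd i) (sq_nonneg _)
  rw [hexp, hsum]
  nlinarith [mul_le_mul_of_nonneg_left h1 (sq_nonneg φ),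
    mul_le_mul_of_nonneg_left h2 hphinn, mul_nonneg (sq_nonneg φ) hS2]
end

section
/- Let W be a symmetric n×n matrix with nonnegative entries and strictly positive diagonal d, p a nonnegative vector in ℝ^n, c ≥ 0, and φ = (√5 − 1)/2. For every y ∈ [0,1]ⁿ with yᵀWy ≤ c and dᵀy ≤ c there exists x ∈ {0,1}ⁿ with xᵀWx ≤ c and pᵀx ≥ φ·pᵀy − max_{i∈[n]} p_i. -/
open Finset

noncomputable def offd {n : ℕ} (W : Matrix (Fin n) (Fin n) ℝ) : Matrix (Fin n) (Fin n) ℝ :=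
  fun i j => if i = j then 0 else W i j

noncomputable def Bf {n : ℕ} (W : Matrix (Fin n) (Fin n) ℝ) (x y : Fin n → ℝ) : ℝ :=
  ∑ i, ∑ j, offd W i j * x i * y j

noncomputable def Gf {n : ℕ} (W : Matrix (Fin n) (Fin n) ℝ) (z : Fin n → ℝ) : ℝ :=
  Bf W z z + ∑ i, W i i * z i

noncomputable def dl {n : ℕ} (i : Fin n) : Fin n → ℝ := fun k => if k = i then 1 else 0

variable {n : ℕ} {W : Matrix (Fin n) (Fin n) ℝ}

lemma offd_nonneg (hW : ∀ i j, 0 ≤ W i j) (i j : Fin n) : 0 ≤ offd W i j := by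
  unfold offd; split <;> [rfl; exact hW i j]

lemma Bf_add_left (x x' y : Fin n → ℝ) : Bf W (x + x') y = Bf W x y + Bf W x' y := by
  unfold Bf
  rw [← Finset.sum_add_distrib]
  refine Finset.sum_congr rfl fun i _ => ?_
  rw [← Finset.sum_add_distrib]
  refine Finset.sum_congr rfl fun j _ => ?_
  simp [Pi.add_apply]; ring

lemma Bf_smul_left (c : ℝ) (x y : Fin n → ℝ) : Bf W (c • x) y = c * Bf W x y := by
  unfold Bf
  rw [Finset.mul_sum]
  refine Finset.sum_congr rfl fun i _ => ?_
  rw [Finset.mul_sum]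
  refine Finset.sum_congr rfl fun j _ => ?_
  simp [Pi.smul_apply, smul_eq_mul]; ring

lemma Bf_comm (hsym : ∀ a b, W a b = W b a) (x y : Fin n → ℝ) : Bf W x y = Bf W y x := by
  unfold Bf
  rw [Finset.sum_comm]
  refine Finset.sum_congr rfl fun i _ => Finset.sum_congr rfl fun j _ => ?_
  unfold offd
  rcases eq_or_ne i j with h | h
  · subst h; ring
  · rw [if_neg h.symm, if_neg h, hsym j i]; ring

lemma Bf_add_right (hsym : ∀ a b, W a b = W b a) (x y y' : Fin n → ℝ) :
    Bf W x (y + y') = Bf W x y + Bf W x y' := by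
  rw [Bf_comm hsym, Bf_add_left, Bf_comm hsym, Bf_comm hsym y']

lemma Bf_smul_right (hsym : ∀ a b, W a b = W b a) (c : ℝ) (x y : Fin n → ℝ) :
    Bf W x (c • y) = c * Bf W x y := by
  rw [Bf_comm hsym, Bf_smul_left, Bf_comm hsym]

lemma Bf_single_left (x : Fin n → ℝ) (i : Fin n) : Bf W (dl i) x = ∑ k, offd W i k * x k := by
  unfold Bf dl
  rw [Finset.sum_eq_single i]
  · simp
  · intro b _ hb
    rw [Finset.sum_eq_zero]
    intro k _; simp [hb]
  · simp

lemma quadForm_eq (z : Fin n → ℝ) :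
    quadForm W z = Bf W z z + ∑ i, W i i * z i * z i := by
  unfold quadForm Bf
  rw [← Finset.sum_add_distrib]
  refine Finset.sum_congr rfl fun i _ => ?_
  have : ∀ j, W i j * z i * z j
      = offd W i j * z i * z j + (if j = i then W i i * z i * z i else 0) := by
    intro j
    unfold offd
    rcases eq_or_ne i j with h | h
    · subst h; simp
    · rw [if_neg h, if_neg (Ne.symm h)]; ring
  rw [Finset.sum_congr rfl fun j _ => this j, Finset.sum_add_distrib,
    Finset.sum_ite_eq' Finset.univ i (fun _ => W i i * z i * z i)]
  simp

lemma sum_mul_v (q : Fin n → ℝ) (i j : Fin n) (a b : ℝ) :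
    ∑ k, q k * (a • dl i + (-b) • dl j) k = a * q i - b * q j := by
  have h : ∀ k, q k * (a • dl i + (-b) • dl j) k
      = (if k = i then a * q i else 0) + (if k = j then (-b) * q j else 0) := by
    intro k
    simp only [Pi.add_apply, Pi.smul_apply, smul_eq_mul, dl]
    split_ifs <;> subst_vars <;> ring
  rw [Finset.sum_congr rfl fun k _ => h k, Finset.sum_add_distrib,
    Finset.sum_ite_eq' Finset.univ i (fun _ => a * q i),
    Finset.sum_ite_eq' Finset.univ j (fun _ => (-b) * q j)]
  simp; ring

lemma Bf_expand (hsym : ∀ a b, W a b = W b a) (z v : Fin n → ℝ) (s : ℝ) :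
    Bf W (z + s • v) (z + s • v) = Bf W z z + 2 * s * Bf W z v + s ^ 2 * Bf W v v := by
  simp only [Bf_add_left, Bf_add_right hsym, Bf_smul_left, Bf_smul_right hsym]
  rw [Bf_comm hsym v z]
  ring

lemma Bf_vv (hsym : ∀ a b, W a b = W b a) (i j : Fin n) (hij : i ≠ j) (a b : ℝ) :
    Bf W (a • dl i + (-b) • dl j) (a • dl i + (-b) • dl j) = -(2 * a * b * W i j) := by
  rw [Bf_add_left, Bf_smul_left, Bf_smul_left, Bf_single_left, Bf_single_left]
  have h1 : ∀ (l : Fin n), ∑ k, offd W l k * (a • dl i + (-b) • dl j) k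
      = a * offd W l i - b * offd W l j := by
    intro l
    have := sum_mul_v (q := fun k => offd W l k) i j a b
    simpa using this
  rw [h1 i, h1 j]
  have hii : offd W i i = 0 := by simp [offd]
  have hjj : offd W j j = 0 := by simp [offd]
  have hij1 : offd W i j = W i j := by simp [offd, hij]
  have hji : offd W j i = W i j := by simp [offd, hij.symm, hsym j i]
  rw [hii, hjj, hij1, hji]; ring

lemma Gf_line (hsym : ∀ a b, W a b = W b a) (z : Fin n → ℝ) (i j : Fin n) (hij : i ≠ j)
    (a b s : ℝ) :
    Gf W (z + s • (a • dl i + (-b) • dl j)) =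
      Gf W z + s * (2 * Bf W z (a • dl i + (-b) • dl j) + (a * W i i - b * W j j))
        - s ^ 2 * (2 * a * b * W i j) := by
  set v := a • dl i + (-b) • dl j with hv
  have hlin : ∑ k, W k k * (z + s • v) k = (∑ k, W k k * z k) + s * (a * W i i - b * W j j) := by
    have h : ∀ k, W k k * (z + s • v) k = W k k * z k + s * (W k k * v k) := by
      intro k; simp only [Pi.add_apply, Pi.smul_apply, smul_eq_mul]; ring
    rw [Finset.sum_congr rfl fun k _ => h k, Finset.sum_add_distrib, ← Finset.mul_sum,
      sum_mul_v (fun k => W k k) i j a b]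
  have hB := Bf_expand hsym z v s
  unfold Gf
  rw [hB, hlin, Bf_vv hsym i j hij]
  ring

lemma Gf_mono (hW : ∀ i j, 0 ≤ W i j) (x z : Fin n → ℝ) (hx0 : ∀ k, 0 ≤ x k)
    (hxz : ∀ k, x k ≤ z k) : Gf W x ≤ Gf W z := by
  unfold Gf Bf
  apply add_le_add
  · refine Finset.sum_le_sum fun i _ => Finset.sum_le_sum fun j _ => ?_
    have h1 : x i * x j ≤ z i * z j :=
      mul_le_mul (hxz i) (hxz j) (hx0 j) (le_trans (hx0 i) (hxz i))
    calc offd W i j * x i * x j = offd W i j * (x i * x j) := by ring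
      _ ≤ offd W i j * (z i * z j) := mul_le_mul_of_nonneg_left h1 (offd_nonneg hW i j)
      _ = offd W i j * z i * z j := by ring
  · exact Finset.sum_le_sum fun i _ => mul_le_mul_of_nonneg_left (hxz i) (hW i i)

lemma sum_line (q z : Fin n → ℝ) (i j : Fin n) (a b s : ℝ) :
    ∑ k, q k * (z + s • (a • dl i + (-b) • dl j)) k
      = (∑ k, q k * z k) + s * (a * q i - b * q j) := by
  have h : ∀ k, q k * (z + s • (a • dl i + (-b) • dl j)) k
      = q k * z k + s * (q k * (a • dl i + (-b) • dl j) k) := by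
    intro k; simp only [Pi.add_apply, Pi.smul_apply, smul_eq_mul]; ring
  rw [Finset.sum_congr rfl fun k _ => h k, Finset.sum_add_distrib, ← Finset.mul_sum,
    sum_mul_v q i j a b]

lemma step_s3 (hW : ∀ i j, 0 ≤ W i j) (hsym : ∀ a b, W a b = W b a) (c : ℝ)
    (p z : Fin n → ℝ) (h0 : ∀ k, 0 ≤ z k) (h1 : ∀ k, z k ≤ 1) (hG : Gf W z ≤ c)
    (i j : Fin n) (hij : i ≠ j) (hpi : 0 < p i) (hpj : 0 < p j)
    (hM : 2 * Bf W z (p j • dl i + (-(p i)) • dl j) + (p j * W i i - p i * W j j) ≤ 0) :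
    ∃ z' : Fin n → ℝ, (∀ k, 0 ≤ z' k) ∧ (∀ k, z' k ≤ 1) ∧ Gf W z' ≤ c ∧
      (∑ k, p k * z' k) = (∑ k, p k * z k) ∧
      (∀ k, k ≠ i → k ≠ j → z' k = z k) ∧ (z' i = 1 ∨ z' j = 0) := by
  set v : Fin n → ℝ := p j • dl i + (-(p i)) • dl j with hv
  set s : ℝ := min ((1 - z i) / p j) (z j / p i) with hs
  have hs0 : 0 ≤ s := le_min (div_nonneg (by linarith [h1 i]) hpj.le) (div_nonneg (h0 j) hpi.le)
  have hsA : s ≤ (1 - z i) / p j := min_le_left _ _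
  have hsB : s ≤ z j / p i := min_le_right _ _
  have hspj : s * p j ≤ 1 - z i := (le_div_iff₀ hpj).mp hsA
  have hspi : s * p i ≤ z j := (le_div_iff₀ hpi).mp hsB
  have hvi : v i = p j := by simp [hv, dl, hij]
  have hvj : v j = -(p i) := by simp [hv, dl, hij.symm]
  have hvk : ∀ k, k ≠ i → k ≠ j → v k = 0 := by
    intro k hk1 hk2; simp [hv, dl, hk1, hk2]
  refine ⟨z + s • v, ?_, ?_, ?_, ?_, ?_, ?_⟩
  · intro k
    rcases eq_or_ne k i with rfl | hk1
    · simp only [Pi.add_apply, Pi.smul_apply, smul_eq_mul, hvi]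
      nlinarith [h0 k]
    rcases eq_or_ne k j with rfl | hk2
    · simp only [Pi.add_apply, Pi.smul_apply, smul_eq_mul, hvj]
      nlinarith [h0 k]
    · simp only [Pi.add_apply, Pi.smul_apply, smul_eq_mul, hvk k hk1 hk2]
      nlinarith [h0 k]
  · intro k
    rcases eq_or_ne k i with rfl | hk1
    · simp only [Pi.add_apply, Pi.smul_apply, smul_eq_mul, hvi]
      linarith
    rcases eq_or_ne k j with rfl | hk2
    · simp only [Pi.add_apply, Pi.smul_apply, smul_eq_mul, hvj]
      nlinarith [h1 k]
    · simp only [Pi.add_apply, Pi.smul_apply, smul_eq_mul, hvk k hk1 hk2]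
      nlinarith [h1 k]
  · have := Gf_line hsym z i j hij (p j) (p i) s
    rw [← hv] at this
    rw [this]
    have h2 : 0 ≤ s ^ 2 * (2 * p j * p i * W i j) :=
      mul_nonneg (sq_nonneg s)
        (mul_nonneg (mul_nonneg (mul_nonneg (by norm_num) hpj.le) hpi.le) (hW i j))
    nlinarith [mul_nonpos_of_nonneg_of_nonpos hs0 hM]
  · have := sum_line p z i j (p j) (p i) s
    rw [← hv] at this
    rw [this]; ring
  · intro k hk1 hk2
    simp only [Pi.add_apply, Pi.smul_apply, smul_eq_mul, hvk k hk1 hk2]; ring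
  · rcases min_cases ((1 - z i) / p j) (z j / p i) with ⟨h, _⟩ | ⟨h, _⟩
    · left
      simp only [Pi.add_apply, Pi.smul_apply, smul_eq_mul, hvi]
      rw [hs, h, div_mul_cancel₀ _ hpj.ne']
      ring
    · right
      simp only [Pi.add_apply, Pi.smul_apply, smul_eq_mul, hvj]
      rw [hs, h]
      field_simp
      ring

lemma drop_facts (hW : ∀ i j, 0 ≤ W i j) (p z : Fin n → ℝ) (h0 : ∀ k, 0 ≤ z k)
    (h1 : ∀ k, z k ≤ 1) (i : Fin n) :
    (∀ k, 0 ≤ Function.update z i 0 k) ∧ (∀ k, Function.update z i 0 k ≤ 1) ∧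
      Gf W (Function.update z i 0) ≤ Gf W z ∧
      (∑ k, p k * Function.update z i 0 k) = (∑ k, p k * z k) - p i * z i := by
  have happ : ∀ k, Function.update z i 0 k = if k = i then 0 else z k := by
    intro k; simp [Function.update_apply]
  have hz0 : ∀ k, 0 ≤ Function.update z i 0 k := by
    intro k; rw [happ]; split
    · exact le_refl 0
    · exact h0 k
  refine ⟨hz0, ?_, ?_, ?_⟩
  · intro k; rw [happ]; split
    · linarith [h1 k]
    · exact h1 k
  · refine Gf_mono hW _ z hz0 fun k => ?_
    rw [happ]; split
    · exact h0 _
    · exact le_refl _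
  · have h : ∀ k, p k * Function.update z i 0 k
        = p k * z k - (if k = i then p i * z i else 0) := by
      intro k; rw [happ]; split_ifs with h
      · subst h; ring
      · ring
    rw [Finset.sum_congr rfl fun k _ => h k, Finset.sum_sub_distrib,
      Finset.sum_ite_eq' Finset.univ i (fun _ => p i * z i)]
    simp

lemma roundG (hW : ∀ i j, 0 ≤ W i j) (hsym : ∀ a b, W a b = W b a)
    (p : Fin n → ℝ) (hp : ∀ i, 0 ≤ p i) (c M : ℝ) (hM0 : 0 ≤ M) (hpM : ∀ i, p i ≤ M) :
    ∀ k : ℕ, ∀ z : Fin n → ℝ, (∀ i, 0 ≤ z i) → (∀ i, z i ≤ 1) → Gf W z ≤ c →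
      ((Finset.univ.filter fun i => z i ≠ 0 ∧ z i ≠ 1).card ≤ k) →
      ∃ x : Fin n → ℝ, (∀ i, x i = 0 ∨ x i = 1) ∧ Gf W x ≤ c ∧
        (∑ i, p i * z i) - M ≤ ∑ i, p i * x i := by
  intro k
  induction k with
  | zero =>
    intro z h0 h1 hG hcard
    have hbin : ∀ i, z i = 0 ∨ z i = 1 := by
      intro i
      by_contra h
      push_neg at h
      have hmem : i ∈ Finset.univ.filter fun i => z i ≠ 0 ∧ z i ≠ 1 :=
        Finset.mem_filter.mpr ⟨Finset.mem_univ i, h⟩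
      have := Finset.card_pos.mpr ⟨i, hmem⟩
      omega
    exact ⟨z, hbin, hG, by linarith⟩
  | succ k ih =>
    intro z h0 h1 hG hcard
    by_cases hle : (Finset.univ.filter fun i => z i ≠ 0 ∧ z i ≠ 1).card ≤ k
    · exact ih z h0 h1 hG hle
    push_neg at hle
    -- the fractional set is nonempty
    obtain ⟨i0, hi0⟩ := Finset.card_pos.mp (by omega :
      0 < (Finset.univ.filter fun i => z i ≠ 0 ∧ z i ≠ 1).card)
    -- helper to bound card after update to 0 at a fractional coordinate
    have hcard_drop : ∀ i ∈ (Finset.univ.filter fun i => z i ≠ 0 ∧ z i ≠ 1),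
        (Finset.univ.filter fun k => Function.update z i 0 k ≠ 0 ∧
          Function.update z i 0 k ≠ 1).card ≤ k := by
      intro i hi
      have hsub : (Finset.univ.filter fun k => Function.update z i 0 k ≠ 0 ∧
          Function.update z i 0 k ≠ 1) ⊆
          (Finset.univ.filter fun i => z i ≠ 0 ∧ z i ≠ 1).erase i := by
        intro a ha
        obtain ⟨-, ha1, ha2⟩ := Finset.mem_filter.mp ha
        have hai : a ≠ i := by
          intro h; subst h; exact ha1 (Function.update_self a 0 z)
        rw [Function.update_of_ne hai] at ha1 ha2
        exact Finset.mem_erase.mpr ⟨hai, Finset.mem_filter.mpr ⟨Finset.mem_univ a, ha1, ha2⟩⟩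
      calc _ ≤ ((Finset.univ.filter fun i => z i ≠ 0 ∧ z i ≠ 1).erase i).card :=
              Finset.card_le_card hsub
        _ = (Finset.univ.filter fun i => z i ≠ 0 ∧ z i ≠ 1).card - 1 :=
              Finset.card_erase_of_mem hi
        _ ≤ k := by omega
    by_cases hA : ∃ i ∈ (Finset.univ.filter fun i => z i ≠ 0 ∧ z i ≠ 1), p i = 0
    · -- drop a zero-profit fractional coordinate; profit unchanged
      obtain ⟨i, hi, hpi⟩ := hA
      obtain ⟨hz0, hz1, hGd, hsum⟩ := drop_facts hW p z h0 h1 (i := i)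
      obtain ⟨x, hxb, hxG, hxs⟩ := ih (Function.update z i 0) hz0 hz1 (le_trans hGd hG)
        (hcard_drop i hi)
      exact ⟨x, hxb, hxG, by rw [hsum, hpi] at hxs; linarith⟩
    push_neg at hA
    by_cases htwo : 1 < (Finset.univ.filter fun i => z i ≠ 0 ∧ z i ≠ 1).card
    · -- pipage step on two fractional coordinates with positive profit
      obtain ⟨i, hi, j, hj, hij⟩ := Finset.one_lt_card.mp htwo
      have hpi : 0 < p i := (hp i).lt_of_ne' (hA i hi)
      have hpj : 0 < p j := (hp j).lt_of_ne' (hA j hj)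
      -- choose the direction with nonpositive slope
      have key : ∃ z' : Fin n → ℝ, (∀ k, 0 ≤ z' k) ∧ (∀ k, z' k ≤ 1) ∧ Gf W z' ≤ c ∧
          (∑ k, p k * z' k) = (∑ k, p k * z k) ∧
          (∀ k, k ≠ i → k ≠ j → z' k = z k) ∧ (z' i = 1 ∨ z' i = 0 ∨ z' j = 0 ∨ z' j = 1) := by
        by_cases hM : 2 * Bf W z (p j • dl i + (-(p i)) • dl j)
            + (p j * W i i - p i * W j j) ≤ 0
        · obtain ⟨z', a1, a2, a3, a4, a5, a6⟩ := step_s3 hW hsym c p z h0 h1 hG i j hij hpi hpj hM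
          exact ⟨z', a1, a2, a3, a4, a5, by tauto⟩
        · have hM' : 2 * Bf W z (p i • dl j + (-(p j)) • dl i)
              + (p i * W j j - p j * W i i) ≤ 0 := by
            have hneg : (p i • dl j + (-(p j)) • dl i) = (-1 : ℝ) • (p j • dl i + (-(p i)) • dl j) := by
              funext a
              simp only [Pi.add_apply, Pi.smul_apply, smul_eq_mul]
              ring
            rw [hneg, Bf_smul_right hsym]
            push_neg at hM
            linarith
          obtain ⟨z', a1, a2, a3, a4, a5, a6⟩ :=
            step_s3 hW hsym c p z h0 h1 hG j i hij.symm hpj hpi hM'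
          exact ⟨z', a1, a2, a3, a4, fun k h1 h2 => a5 k h2 h1, by tauto⟩
      obtain ⟨z', a1, a2, a3, a4, a5, a6⟩ := key
      -- one of i, j has become integral, so the fractional set shrank
      have hF' : (Finset.univ.filter fun k => z' k ≠ 0 ∧ z' k ≠ 1).card ≤ k := by
        have hsub : ∀ i0 ∈ (Finset.univ.filter fun i => z i ≠ 0 ∧ z i ≠ 1),
            (z' i0 = 0 ∨ z' i0 = 1) → (i0 = i ∨ i0 = j) →
            (Finset.univ.filter fun k => z' k ≠ 0 ∧ z' k ≠ 1) ⊆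
            (Finset.univ.filter fun i => z i ≠ 0 ∧ z i ≠ 1).erase i0 := by
          intro i0 hi0mem hi0int _
          intro a ha
          obtain ⟨-, ha1, ha2⟩ := Finset.mem_filter.mp ha
          have hai0 : a ≠ i0 := by
            rintro rfl
            rcases hi0int with h | h
            · exact ha1 h
            · exact ha2 h
          refine Finset.mem_erase.mpr ⟨hai0, Finset.mem_filter.mpr ⟨Finset.mem_univ a, ?_⟩⟩
          rcases eq_or_ne a i with rfl | hai
          · exact (Finset.mem_filter.mp hi).2
          rcases eq_or_ne a j with rfl | haj
          · exact (Finset.mem_filter.mp hj).2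
          · rw [← a5 a hai haj]; exact ⟨ha1, ha2⟩
        have hbound : ∀ i0 ∈ (Finset.univ.filter fun i => z i ≠ 0 ∧ z i ≠ 1),
            (z' i0 = 0 ∨ z' i0 = 1) → (i0 = i ∨ i0 = j) →
            (Finset.univ.filter fun k => z' k ≠ 0 ∧ z' k ≠ 1).card ≤ k := by
          intro i0 h1' h2' h3'
          calc _ ≤ ((Finset.univ.filter fun i => z i ≠ 0 ∧ z i ≠ 1).erase i0).card :=
                Finset.card_le_card (hsub i0 h1' h2' h3')
            _ = (Finset.univ.filter fun i => z i ≠ 0 ∧ z i ≠ 1).card - 1 :=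
                Finset.card_erase_of_mem h1'
            _ ≤ k := by omega
        rcases a6 with h | h | h | h
        · exact hbound i hi (Or.inr h) (Or.inl rfl)
        · exact hbound i hi (Or.inl h) (Or.inl rfl)
        · exact hbound j hj (Or.inl h) (Or.inr rfl)
        · exact hbound j hj (Or.inr h) (Or.inr rfl)
      obtain ⟨x, hxb, hxG, hxs⟩ := ih z' a1 a2 a3 hF'
      exact ⟨x, hxb, hxG, by rw [← a4]; exact hxs⟩
    · -- exactly one fractional coordinate: drop it, losing at most M
      push_neg at htwo
      have hone : (Finset.univ.filter fun i => z i ≠ 0 ∧ z i ≠ 1).card = 1 := by omega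
      obtain ⟨a, ha⟩ := Finset.card_eq_one.mp hone
      have hia : i0 = a := by
        have := hi0
        rw [ha] at this
        exact Finset.mem_singleton.mp this
      subst hia
      obtain ⟨hz0, hz1, hGd, hsum⟩ := drop_facts hW p z h0 h1 (i := i0)
      refine ⟨Function.update z i0 0, ?_, le_trans hGd hG, ?_⟩
      · intro k
        rcases eq_or_ne k i0 with rfl | hk
        · left; exact Function.update_self k 0 z
        · rw [Function.update_of_ne hk]
          by_contra h
          push_neg at h
          have : k ∈ Finset.univ.filter fun i => z i ≠ 0 ∧ z i ≠ 1 :=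
            Finset.mem_filter.mpr ⟨Finset.mem_univ k, h⟩
          rw [ha] at this
          exact hk (Finset.mem_singleton.mp this)
      · rw [hsum]
        have h1' : p i0 * z i0 ≤ M := by
          nlinarith [mul_nonneg (hp i0) (sub_nonneg.mpr (h1 i0)), hpM i0]
        linarith

theorem stmt_3 {n : ℕ} (hn : 0 < n) (W : Matrix (Fin n) (Fin n) ℝ) (hsym : W.IsSymm)
    (hW : ∀ i j, 0 ≤ W i j) (hdiag : ∀ i, 0 < W i i)
    (p : Fin n → ℝ) (hp : ∀ i, 0 ≤ p i) (c : ℝ) (hc : 0 ≤ c)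
    (φ : ℝ) (hφ : φ = (Real.sqrt 5 - 1) / 2)
    (y : Fin n → ℝ) (hy : ∀ i, y i ∈ Set.Icc (0:ℝ) 1)
    (h1 : quadForm W y ≤ c) (h2 : (∑ i, W i i * y i) ≤ c) :
    ∃ x : Fin n → ℝ, (∀ i, x i = 0 ∨ x i = 1) ∧ quadForm W x ≤ c ∧
      φ * (∑ i, p i * y i) -
          Finset.univ.sup' (Finset.univ_nonempty_iff.mpr (Fin.pos_iff_nonempty.mp hn)) p
        ≤ ∑ i, p i * x i := by
  have hsym' : ∀ a b, W a b = W b a := fun a b => hsym.apply b a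
  -- facts about φ
  have h5 : Real.sqrt 5 ^ 2 = 5 := Real.sq_sqrt (by norm_num)
  have h5n : 0 ≤ Real.sqrt 5 := Real.sqrt_nonneg 5
  have hφ0 : 0 ≤ φ := by rw [hφ]; nlinarith
  have hφ1 : φ ≤ 1 := by rw [hφ]; nlinarith
  have hφφ : φ ^ 2 + φ = 1 := by rw [hφ]; nlinarith
  -- the max of p
  set M := Finset.univ.sup' (Finset.univ_nonempty_iff.mpr (Fin.pos_iff_nonempty.mp hn)) p
    with hM
  have hpM : ∀ i, p i ≤ M := fun i => Finset.le_sup' p (Finset.mem_univ i)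
  have hM0 : 0 ≤ M := le_trans (hp ⟨0, hn⟩) (hpM ⟨0, hn⟩)
  -- the scaled point
  set z : Fin n → ℝ := φ • y with hz
  have hz0 : ∀ i, 0 ≤ z i := fun i => mul_nonneg hφ0 (hy i).1
  have hz1 : ∀ i, z i ≤ 1 := fun i =>
    mul_le_one₀ hφ1 (hy i).1 (hy i).2
  have hGz : Gf W z ≤ c := by
    have hBz : Bf W z z = φ ^ 2 * Bf W y y := by
      rw [hz, Bf_smul_left, Bf_smul_right hsym']; ring
    have hlin : ∑ i, W i i * z i = φ * ∑ i, W i i * y i := by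
      rw [Finset.mul_sum]
      refine Finset.sum_congr rfl fun i _ => ?_
      simp only [hz, Pi.smul_apply, smul_eq_mul]; ring
    have hBy : Bf W y y = quadForm W y - ∑ i, W i i * y i * y i := by
      rw [quadForm_eq]; ring
    have hsq : 0 ≤ ∑ i, W i i * y i * y i :=
      Finset.sum_nonneg fun i _ => by nlinarith [hW i i, mul_self_nonneg (y i)]
    rw [Gf, hBz, hlin, hBy]
    nlinarith [sq_nonneg φ, mul_le_mul_of_nonneg_left h1 (sq_nonneg φ),
      mul_le_mul_of_nonneg_left h2 hφ0, mul_nonneg (sq_nonneg φ) hsq]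
  obtain ⟨x, hxb, hxG, hxs⟩ := roundG hW hsym' p hp c M hM0 hpM n z hz0 hz1 hGz
    (le_trans (Finset.card_filter_le _ _) (by simp))
  refine ⟨x, hxb, ?_, ?_⟩
  · rw [quadForm_eq]
    have : ∑ i, W i i * x i * x i = ∑ i, W i i * x i := by
      refine Finset.sum_congr rfl fun i _ => ?_
      rcases hxb i with h | h <;> rw [h] <;> ring
    rw [this]
    exact hxG
  · have : ∑ i, p i * z i = φ * ∑ i, p i * y i := by
      rw [Finset.mul_sum]
      refine Finset.sum_congr rfl fun i _ => ?_
      simp only [hz, Pi.smul_apply, smul_eq_mul]; ring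
    rw [← this]
    exact hxs
end

section
/- Let m ∈ ℕ, m ≥ 1, and let (θ_t)_{t≥1} be the real sequence defined by θ₁ = 1/m and the recursion 1 − (m + 2√(t·m))·θ_{t+1} = ∑_{i=1}^t θ_i for t ≥ 1. Then ∑_{t=1}^m θ_t ≥ 1 − √3/e. -/
noncomputable def Fa (M : ℝ) : ℝ → ℝ :=
  fun s => Real.sqrt (s/M) - Real.log (1 + 2 * Real.sqrt (s/M)) / 2


lemma hF_deriv (M : ℝ) (hM : 0 < M) (s : ℝ) (hs : 0 < s) :
    HasDerivAt (Fa M) (1 / (M + 2 * Real.sqrt (s*M))) s := by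
  unfold Fa
  have hsM : (0:ℝ) < s / M := div_pos hs hM
  have h1 : HasDerivAt (fun s : ℝ => s / M) (1 / M) s := by
    simpa using (hasDerivAt_id s).div_const M
  have h2 : HasDerivAt (fun s : ℝ => Real.sqrt (s/M)) (1 / (2 * Real.sqrt (s/M)) * (1/M)) s :=
    (Real.hasDerivAt_sqrt hsM.ne').comp s h1
  have hpos : (0:ℝ) < 1 + 2 * Real.sqrt (s/M) := by positivity
  have h4 : HasDerivAt (fun s : ℝ => 1 + 2 * Real.sqrt (s/M))
      (2 * (1 / (2 * Real.sqrt (s/M)) * (1/M))) s := (h2.const_mul 2).const_add 1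
  have h5 : HasDerivAt (fun s : ℝ => Real.log (1 + 2 * Real.sqrt (s/M)))
      (2 * (1 / (2 * Real.sqrt (s/M)) * (1/M)) / (1 + 2 * Real.sqrt (s/M))) s :=
    h4.log hpos.ne'
  have h6 := h2.sub (h5.div_const 2)
  convert h6 using 1
  case e'_4 => exact rfl
  case e'_5 => exact rfl
  case e'_8 => exact rfl
  have ha : (0:ℝ) < Real.sqrt s := Real.sqrt_pos.mpr hs
  have hb : (0:ℝ) < Real.sqrt M := Real.sqrt_pos.mpr hM
  have e1 : Real.sqrt (s/M) = Real.sqrt s / Real.sqrt M := Real.sqrt_div hs.le M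
  have e2 : Real.sqrt (s*M) = Real.sqrt s * Real.sqrt M := Real.sqrt_mul hs.le M
  have e3 : M = Real.sqrt M * Real.sqrt M := (Real.mul_self_sqrt hM.le).symm
  rw [e1, e2, show M = Real.sqrt M ^ 2 from (Real.sq_sqrt hM.le).symm]
  have h8 : (0:ℝ) < 1 + 2 * (Real.sqrt s / Real.sqrt M) := by positivity
  field_simp
  ring_nf
  rw [Real.sq_sqrt hM.le]
  rw [Real.sq_sqrt hM.le]
  ring


lemma hG_deriv (y : ℝ) (hy : 0 ≤ y) :
    HasDerivAt (fun y : ℝ => Real.log (1 + 2*y) - 2*y + 2*y^2) (2/(1+2*y) - 2 + 4*y) y := by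
  have hpos : (0:ℝ) < 1 + 2*y := by linarith
  have h1 : HasDerivAt (fun y : ℝ => 1 + 2*y) 2 y := by
    simpa using ((hasDerivAt_id y).const_mul 2).const_add 1
  have h2 := h1.log hpos.ne'
  have h3 : HasDerivAt (fun y : ℝ => 2*y) 2 y := by
    simpa using (hasDerivAt_id y).const_mul 2
  have h4 : HasDerivAt (fun y : ℝ => 2*y^2) (4*y) y := by
    have h := (hasDerivAt_pow 2 y).const_mul 2
    have e : (2:ℝ) * (((2:ℕ):ℝ) * y ^ (2-1)) = 4*y := by push_cast; ring_nf
    rw [e] at h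
    exact h
  exact (h2.sub h3).add h4

lemma log_lb (x : ℝ) (hx : 0 ≤ x) : 2*x - 2*x^2 ≤ Real.log (1 + 2*x) := by
  set G : ℝ → ℝ := fun y => Real.log (1 + 2*y) - 2*y + 2*y^2 with hG
  have hcont : ContinuousOn G (Set.Icc 0 x) := fun y hy =>
    ((hG_deriv y hy.1).continuousAt).continuousWithinAt
  have hdiff : DifferentiableOn ℝ G (interior (Set.Icc 0 x)) := by
    rw [interior_Icc]
    exact fun y hy => ((hG_deriv y hy.1.le).differentiableAt).differentiableWithinAt
  have hd : ∀ y ∈ interior (Set.Icc 0 x), (0:ℝ) ≤ deriv G y := by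
    rw [interior_Icc]
    intro y hy
    rw [(hG_deriv y hy.1.le).deriv]
    have hpos : (0:ℝ) < 1 + 2*y := by linarith [hy.1]
    have h5 : 2 - 4*y ≤ 2/(1+2*y) := by
      rw [le_div_iff₀ hpos]; nlinarith [hy.1]
    linarith
  have := (convex_Icc (0:ℝ) x).mul_sub_le_image_sub_of_le_deriv hcont hdiff hd
    0 (Set.left_mem_Icc.mpr hx) x (Set.right_mem_Icc.mpr hx) hx
  have hG0 : G 0 = 0 := by simp [hG]
  simp only [hG] at this hG0 ⊢
  nlinarith [this]

lemma step_bound (M : ℝ) (hM : 1 ≤ M) (t : ℝ) (ht : 1 ≤ t) :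
    Fa M (t+1) - Fa M t ≤ 1 / (M + 2 * Real.sqrt (t*M)) := by
  have hM0 : (0:ℝ) < M := by linarith
  have hcont : ContinuousOn (Fa M) (Set.Icc t (t+1)) := fun s hs =>
    ((hF_deriv M hM0 s (by linarith [hs.1])).continuousAt).continuousWithinAt
  have hdiff : DifferentiableOn ℝ (Fa M) (interior (Set.Icc t (t+1))) := by
    rw [interior_Icc]
    exact fun s hs => ((hF_deriv M hM0 s (by linarith [hs.1])).differentiableAt).differentiableWithinAt
  have hd : ∀ s ∈ interior (Set.Icc t (t+1)), deriv (Fa M) s ≤ 1 / (M + 2 * Real.sqrt (t*M)) := by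
    rw [interior_Icc]
    intro s hs
    rw [(hF_deriv M hM0 s (by linarith [hs.1])).deriv]
    have h1 : Real.sqrt (t*M) ≤ Real.sqrt (s*M) :=
      Real.sqrt_le_sqrt (mul_le_mul_of_nonneg_right hs.1.le hM0.le)
    have h2 : (0:ℝ) < M + 2 * Real.sqrt (t*M) := by positivity
    exact one_div_le_one_div_of_le h2 (by linarith)
  have := (convex_Icc t (t+1)).image_sub_le_mul_sub_of_deriv_le hcont hdiff hd
    t (Set.left_mem_Icc.mpr (by linarith)) (t+1) (Set.right_mem_Icc.mpr (by linarith)) (by linarith)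
  simpa using this

theorem stmt_5 (m : ℕ) (hm : 1 ≤ m) (θ : ℕ → ℝ)
    (hθ1 : θ 1 = 1 / (m : ℝ))
    (hrec : ∀ t : ℕ, 1 ≤ t →
      1 - ((m : ℝ) + 2 * Real.sqrt ((t : ℝ) * (m : ℝ))) * θ (t + 1) =
        ∑ i ∈ Finset.Icc 1 t, θ i) :
    1 - Real.sqrt 3 / Real.exp 1 ≤ ∑ t ∈ Finset.Icc 1 m, θ t := by
  set M : ℝ := (m : ℝ) with hMdef
  have hM1 : (1:ℝ) ≤ M := by rw [hMdef]; exact_mod_cast hm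
  have hM0 : (0:ℝ) < M := by linarith
  set S : ℕ → ℝ := fun t => ∑ i ∈ Finset.Icc 1 t, θ i with hSdef
  set c : ℕ → ℝ := fun t => M + 2 * Real.sqrt ((t:ℝ) * M) with hcdef
  have hcM : ∀ t : ℕ, M ≤ c t := fun t => by
    have : 0 ≤ Real.sqrt ((t:ℝ)*M) := Real.sqrt_nonneg _
    simp only [hcdef]; linarith
  have hcpos : ∀ t : ℕ, 0 < c t := fun t => lt_of_lt_of_le hM0 (hcM t)
  have step : ∀ t : ℕ, 1 ≤ t → 1 - S (t+1) = (1 - 1/(c t)) * (1 - S t) := by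
    intro t ht
    have h := hrec t ht
    have hsum : S (t+1) = S t + θ (t+1) := Finset.sum_Icc_succ_top (by omega) θ
    have hcne : c t ≠ 0 := (hcpos t).ne'
    have hθt : c t * θ (t+1) = 1 - S t := by simp only [hSdef, hcdef] at h ⊢; linarith
    rw [hsum]
    field_simp
    nlinarith [hθt]
  have claim : ∀ t : ℕ, 1 ≤ t →
      0 ≤ 1 - S t ∧ 1 - S t ≤ (1 - 1/M) * Real.exp (-∑ i ∈ Finset.Icc 1 (t-1), 1/c i) := by
    intro t ht
    induction t, ht using Nat.le_induction with
    | base =>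
      have hS1 : S 1 = 1/M := by simp [hSdef, hθ1]
      have h1M : 1/M ≤ 1 := by rw [div_le_one hM0]; exact hM1
      constructor
      · rw [hS1]; linarith
      · simp [hS1]
    | succ t ht ih =>
      obtain ⟨ih0, ih1⟩ := ih
      have f0 : 0 ≤ 1 - 1/(c t) := by
        have : 1/(c t) ≤ 1 := by rw [div_le_one (hcpos t)]; linarith [hcM t]
        linarith
      have fe : 1 - 1/(c t) ≤ Real.exp (-(1/c t)) := by
        have := Real.add_one_le_exp (-(1/c t)); linarith
      have hst := step t ht
      have hsum2 : ∑ i ∈ Finset.Icc 1 t, (1:ℝ)/c i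
          = ∑ i ∈ Finset.Icc 1 (t-1), (1:ℝ)/c i + 1/c t := by
        obtain ⟨k, rfl⟩ : ∃ k, t = k+1 := ⟨t-1, by omega⟩
        simpa using Finset.sum_Icc_succ_top (by omega : 1 ≤ k+1) (fun i => (1:ℝ)/c i)
      have hEnonneg : 0 ≤ (1 - 1/M) * Real.exp (-∑ i ∈ Finset.Icc 1 (t-1), 1/c i) := by
        have h1M : 1/M ≤ 1 := by rw [div_le_one hM0]; exact hM1
        have := Real.exp_pos (-∑ i ∈ Finset.Icc 1 (t-1), 1/c i)
        nlinarith
      constructor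
      · rw [hst]; exact mul_nonneg f0 ih0
      · rw [hst]
        have h1 : (1 - 1/(c t)) * (1 - S t)
            ≤ (1 - 1/(c t)) * ((1 - 1/M) * Real.exp (-∑ i ∈ Finset.Icc 1 (t-1), 1/c i)) :=
          mul_le_mul_of_nonneg_left ih1 f0
        have h2 : (1 - 1/(c t)) * ((1 - 1/M) * Real.exp (-∑ i ∈ Finset.Icc 1 (t-1), 1/c i))
            ≤ Real.exp (-(1/c t)) * ((1 - 1/M) * Real.exp (-∑ i ∈ Finset.Icc 1 (t-1), 1/c i)) :=
          mul_le_mul_of_nonneg_right fe hEnonneg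
        have h3 : Real.exp (-(1/c t)) * ((1 - 1/M) * Real.exp (-∑ i ∈ Finset.Icc 1 (t-1), 1/c i))
            = (1 - 1/M) * Real.exp (-∑ i ∈ Finset.Icc 1 (t+1-1), 1/c i) := by
          have : (t+1-1 : ℕ) = t := by omega
          rw [this, hsum2, show -(∑ i ∈ Finset.Icc 1 (t-1), (1:ℝ)/c i + 1/c t)
            = -(1/c t) + -∑ i ∈ Finset.Icc 1 (t-1), (1:ℝ)/c i by ring, Real.exp_add]
          ring
        linarith
  have key := (claim m hm).2
  set A : ℝ := ∑ i ∈ Finset.Icc 1 (m-1), 1/c i with hAdef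
  -- telescoping and comparison
  have termwise : ∀ t ∈ Finset.Icc 1 (m-1), Fa M ((t:ℝ)+1) - Fa M (t:ℝ) ≤ 1/c t := by
    intro t htm
    have ht1 : (1:ℝ) ≤ (t:ℝ) := by
      have := (Finset.mem_Icc.mp htm).1; exact_mod_cast this
    exact step_bound M hM1 (t:ℝ) ht1
  have tele : ∑ t ∈ Finset.Icc 1 (m-1), (Fa M ((t:ℝ)+1) - Fa M (t:ℝ)) = Fa M M - Fa M 1 := by
    rw [← Finset.Ico_add_one_right_eq_Icc, show m-1+1 = m from by omega, Finset.sum_Ico_eq_sum_range]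
    have e1 : ∀ i ∈ Finset.range (m-1),
        (Fa M (((1+i:ℕ):ℝ)+1) - Fa M ((1+i:ℕ):ℝ))
        = (fun j : ℕ => Fa M ((j:ℝ)+1)) (i+1) - (fun j : ℕ => Fa M ((j:ℝ)+1)) i := by
      intro i _
      simp only
      congr 2 <;> push_cast <;> ring
    rw [Finset.sum_congr rfl e1, Finset.sum_range_sub (fun j : ℕ => Fa M ((j:ℝ)+1))]
    congr 2
    · push_cast [Nat.cast_sub hm]; rw [hMdef]; ring
    · norm_num
  have hA_ge : Fa M M - Fa M 1 ≤ A := by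
    rw [← tele, hAdef]
    exact Finset.sum_le_sum termwise
  have hFm : Fa M M = 1 - Real.log 3 / 2 := by
    simp only [Fa, div_self hM0.ne', Real.sqrt_one]
    norm_num
  have hF1 : Fa M 1 ≤ 1/M := by
    set x : ℝ := Real.sqrt (1/M) with hxdef
    have hx0 : 0 ≤ x := Real.sqrt_nonneg _
    have hx2 : x^2 = 1/M := Real.sq_sqrt (by positivity)
    have hlog := log_lb x hx0
    have : Fa M 1 = x - Real.log (1 + 2*x) / 2 := by simp [Fa, hxdef]
    rw [this, ← hx2]
    nlinarith
  have hA_final : 1 - Real.log 3 / 2 - 1/M ≤ A := by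
    rw [hFm] at hA_ge; linarith
  -- final chain
  have h1M : 1 - 1/M ≤ Real.exp (-(1/M)) := by
    have := Real.add_one_le_exp (-(1/M)); linarith
  have hchain : 1 - S m ≤ Real.exp (-(1/M) - A) := by
    have h2 : (1 - 1/M) * Real.exp (-A) ≤ Real.exp (-(1/M)) * Real.exp (-A) :=
      mul_le_mul_of_nonneg_right h1M (Real.exp_pos _).le
    rw [← Real.exp_add] at h2
    calc 1 - S m ≤ (1 - 1/M) * Real.exp (-A) := key
      _ ≤ Real.exp (-(1/M) + -A) := h2
      _ = Real.exp (-(1/M) - A) := by ring_nf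
  have hexp : Real.exp (-(1/M) - A) ≤ Real.sqrt 3 / Real.exp 1 := by
    have harg : -(1/M) - A ≤ Real.log 3 / 2 - 1 := by linarith
    have h3 : Real.exp (Real.log 3 / 2 - 1) = Real.sqrt 3 / Real.exp 1 := by
      rw [Real.exp_sub, ← Real.log_sqrt (by norm_num : (0:ℝ) ≤ 3),
        Real.exp_log (Real.sqrt_pos.mpr (by norm_num))]
    rw [← h3]
    exact Real.exp_le_exp.mpr harg
  have : 1 - S m ≤ Real.sqrt 3 / Real.exp 1 := le_trans hchain hexp
  simp only [hSdef] at this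
  linarith
end

section
/- Let m ∈ ℕ, m ≥ 1, let w₀, w₁, …, w_m be natural numbers with 0 = w₀ < w₁ < ⋯ < w_m, and let θ₁, …, θ_m ≥ 0 be reals. Then ∑_{i=1}^m θ_i·(w_i − w_{i−1}) ≥ (1 − √3/e) · min_{t=0,…,m−1} [ ∑_{i=1}^t θ_i·(w_i − w_{i−1}) + θ_{t+1}·(w_m + 2√(w_t·w_m)) ]. -/
noncomputable def Ff (W y : ℝ) : ℝ :=
  Real.sqrt (y / W) - Real.log (1 + 2 * Real.sqrt (y / W)) / 2

lemma sqrtxW (W x : ℝ) (hW : 0 < W) (hx : 0 ≤ x) :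
    Real.sqrt (x * W) = Real.sqrt (x / W) * W := by
  rw [show x * W = (x / W) * W ^ 2 by field_simp,
    Real.sqrt_mul (div_nonneg hx hW.le), Real.sqrt_sq hW.le]

lemma hasDerivF (W : ℝ) (hW : 0 < W) (x : ℝ) (hx : 0 < x) :
    HasDerivAt (Ff W) (1 / (W + 2 * Real.sqrt (x * W))) x := by
  have hxW : x / W ≠ 0 := ne_of_gt (div_pos hx hW)
  have h1 : HasDerivAt (fun y : ℝ => y / W) (1 / W) x := (hasDerivAt_id x).div_const W
  have hs : HasDerivAt (fun y => Real.sqrt (y / W)) (1 / (2 * Real.sqrt (x / W)) * (1 / W)) x :=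
    (Real.hasDerivAt_sqrt hxW).comp x h1
  have hsp : 0 < Real.sqrt (x / W) := Real.sqrt_pos.mpr (div_pos hx hW)
  have hpos : (0:ℝ) < 1 + 2 * Real.sqrt (x / W) := by positivity
  have hlog : HasDerivAt (fun y => Real.log (1 + 2 * Real.sqrt (y / W)))
      ((2 * (1 / (2 * Real.sqrt (x / W)) * (1 / W))) / (1 + 2 * Real.sqrt (x / W))) x := by
    have := ((hasDerivAt_const x (1:ℝ)).add (hs.const_mul 2)).log (ne_of_gt hpos)
    simpa using this
  have H := hs.sub (hlog.div_const 2)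
  refine H.congr_deriv ?_
  rw [sqrtxW W x hW hx.le]
  have h1 : Real.sqrt (x / W) ≠ 0 := ne_of_gt hsp
  have h2 : (1 : ℝ) + 2 * Real.sqrt (x / W) ≠ 0 := ne_of_gt hpos
  have h3 : W + 2 * (Real.sqrt (x / W) * W) ≠ 0 := by positivity
  field_simp
  ring


lemma contF (W : ℝ) : Continuous (Ff W) := by
  have hs : Continuous (fun y : ℝ => Real.sqrt (y / W)) :=
    Real.continuous_sqrt.comp (continuous_id.div_const W)
  exact hs.sub (((continuous_const.add (continuous_const.mul hs)).log
    (fun x => by simp only [Pi.add_apply, Pi.mul_apply]; positivity)).div_const 2)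

lemma slopeF (W a b : ℝ) (hW : 0 < W) (ha : 0 ≤ a) (hab : a < b) :
    Ff W b - Ff W a ≤ (b - a) / (W + 2 * Real.sqrt (a * W)) := by
  obtain ⟨c, hc, hder⟩ := exists_hasDerivAt_eq_slope (Ff W)
    (fun x => 1 / (W + 2 * Real.sqrt (x * W))) hab ((contF W).continuousOn)
    (fun x hx => hasDerivF W hW x (lt_of_le_of_lt ha hx.1))
  have hcb : Ff W b - Ff W a = (b - a) * (1 / (W + 2 * Real.sqrt (c * W))) := by
    rw [hder]
    field_simp [ne_of_gt (sub_pos.mpr hab)]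
  rw [hcb]
  have hsq : Real.sqrt (a * W) ≤ Real.sqrt (c * W) :=
    Real.sqrt_le_sqrt (by nlinarith [hc.1])
  have h1 : 0 < W + 2 * Real.sqrt (a * W) := by positivity
  have h2 : 0 < W + 2 * Real.sqrt (c * W) := by positivity
  rw [mul_one_div]
  exact div_le_div_of_nonneg_left (by linarith) h1 (by linarith) |>.trans_eq rfl

lemma stepF (W a b : ℝ) (hW : 0 < W) (ha : 0 ≤ a) (hab : a < b) :
    1 - (b - a) / (W + 2 * Real.sqrt (a * W)) ≤ Real.exp (-(Ff W b - Ff W a)) := by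
  have h := slopeF W a b hW ha hab
  have h2 : Real.exp (-((b - a) / (W + 2 * Real.sqrt (a * W)))) ≤
      Real.exp (-(Ff W b - Ff W a)) := Real.exp_le_exp.mpr (by linarith)
  have h3 := Real.add_one_le_exp (-((b - a) / (W + 2 * Real.sqrt (a * W))))
  linarith


lemma FfW (W : ℝ) (hW : 0 < W) :
    Real.exp (-(Ff W W)) = Real.sqrt 3 / Real.exp 1 := by
  have h1 : Ff W W = 1 - Real.log 3 / 2 := by
    simp [Ff, div_self hW.ne', Real.sqrt_one]
    norm_num
  rw [h1, show -(1 - Real.log 3 / 2) = Real.log 3 / 2 - 1 by ring, Real.exp_sub]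
  congr 1
  rw [← Real.log_sqrt (by norm_num : (0:ℝ) ≤ 3), Real.exp_log (by positivity)]

lemma Ff0 (W : ℝ) : Ff W 0 = 0 := by simp [Ff]

lemma auxmain (m : ℕ) (hm : 1 ≤ m) (w : ℕ → ℕ) (hw0 : w 0 = 0)
    (hmono : ∀ i < m, w i < w (i + 1))
    (θ : ℕ → ℝ) (hθ : ∀ i, 1 ≤ i → i ≤ m → 0 ≤ θ i) (A : ℝ) (hA0 : 0 ≤ A)
    (hA : ∀ t < m, A ≤ (∑ i ∈ Finset.Icc 1 t, θ i * ((w i : ℝ) - (w (i - 1) : ℝ)))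
        + θ (t + 1) * ((w m : ℝ) + 2 * Real.sqrt ((w t : ℝ) * (w m : ℝ)))) :
    (1 - Real.sqrt 3 / Real.exp 1) * A
      ≤ ∑ i ∈ Finset.Icc 1 m, θ i * ((w i : ℝ) - (w (i - 1) : ℝ)) := by
  set W : ℝ := (w m : ℝ) with hWdef
  set S : ℕ → ℝ := fun t => ∑ i ∈ Finset.Icc 1 t, θ i * ((w i : ℝ) - (w (i - 1) : ℝ)) with hSdef
  have hWpos : 0 < W := by
    have h := hmono (m - 1) (by omega)
    rw [show m - 1 + 1 = m by omega] at h
    have h2 : 0 < w m := lt_of_le_of_lt (Nat.zero_le _) h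
    rw [hWdef]
    exact_mod_cast h2
  have key : ∀ t, t ≤ m → A - S t ≤ A * Real.exp (-(Ff W (w t))) := by
    intro t
    induction t with
    | zero =>
      intro _
      simp [hSdef, hw0, Ff0]
    | succ t ih =>
      intro ht
      have ihm := ih (by omega)
      have hstep : S (t + 1) = S t + θ (t + 1) * ((w (t + 1) : ℝ) - (w t : ℝ)) := by
        simp only [hSdef]
        rw [Finset.sum_Icc_succ_top (by omega : 1 ≤ t + 1)]
        simp
      have hab : (w t : ℝ) < (w (t + 1) : ℝ) := by exact_mod_cast hmono t (by omega)
      have ha : (0:ℝ) ≤ (w t : ℝ) := Nat.cast_nonneg _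
      have hθ1 : 0 ≤ θ (t + 1) := hθ (t + 1) (by omega) (by omega)
      have hexp1 : (0:ℝ) < Real.exp (-(Ff W (w (t + 1)))) := Real.exp_pos _
      by_cases hAS : A - S t ≤ 0
      · have : A - S (t + 1) ≤ A - S t := by rw [hstep]; nlinarith
        nlinarith
      · push_neg at hAS
        set P := W + 2 * Real.sqrt ((w t : ℝ) * W) with hP
        have hPpos : 0 < P := by positivity
        have hAt := hA t (by omega)
        have hθb : (A - S t) / P ≤ θ (t + 1) := by
          rw [div_le_iff₀ hPpos]
          calc A - S t ≤ θ (t + 1) * (W + 2 * Real.sqrt ((w t : ℝ) * W)) := by linarith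
            _ = θ (t + 1) * P := by rw [hP]
        have h1 : A - S (t + 1) ≤ (A - S t) * (1 - ((w (t + 1) : ℝ) - (w t : ℝ)) / P) := by
          have hmm : (A - S t) / P * ((w (t + 1) : ℝ) - (w t : ℝ))
              ≤ θ (t + 1) * ((w (t + 1) : ℝ) - (w t : ℝ)) :=
            mul_le_mul_of_nonneg_right hθb (by linarith)
          have e1 : (A - S t) * (1 - ((w (t + 1) : ℝ) - (w t : ℝ)) / P)
              = (A - S t) - (A - S t) / P * ((w (t + 1) : ℝ) - (w t : ℝ)) := by ring
          rw [hstep, e1]; linarith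
        have h2 : 1 - ((w (t + 1) : ℝ) - (w t : ℝ)) / P
            ≤ Real.exp (-(Ff W (w (t + 1)) - Ff W (w t))) := stepF W _ _ hWpos ha hab
        calc A - S (t + 1)
            ≤ (A - S t) * Real.exp (-(Ff W (w (t + 1)) - Ff W (w t))) :=
              h1.trans (mul_le_mul_of_nonneg_left h2 hAS.le)
          _ ≤ (A * Real.exp (-(Ff W (w t)))) * Real.exp (-(Ff W (w (t + 1)) - Ff W (w t))) :=
              mul_le_mul_of_nonneg_right ihm (Real.exp_pos _).le
          _ = A * Real.exp (-(Ff W (w (t + 1)))) := by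
              rw [mul_assoc, ← Real.exp_add]; ring_nf
  have hfin := key m le_rfl
  rw [show ((w m : ℝ)) = W from rfl, FfW W hWpos] at hfin
  nlinarith


theorem stmt_7 (m : ℕ) (hm : 1 ≤ m) (w : ℕ → ℕ) (hw0 : w 0 = 0)
    (hmono : ∀ i < m, w i < w (i + 1))
    (θ : ℕ → ℝ) (hθ : ∀ i, 1 ≤ i → i ≤ m → 0 ≤ θ i) :
    (1 - Real.sqrt 3 / Real.exp 1) *
        (Finset.range m).inf' ⟨0, Finset.mem_range.mpr hm⟩
          (fun t => (∑ i ∈ Finset.Icc 1 t, θ i * ((w i : ℝ) - (w (i - 1) : ℝ))) +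
            θ (t + 1) * ((w m : ℝ) + 2 * Real.sqrt ((w t : ℝ) * (w m : ℝ))))
      ≤ ∑ i ∈ Finset.Icc 1 m, θ i * ((w i : ℝ) - (w (i - 1) : ℝ)) := by
  apply auxmain m hm w hw0 hmono θ hθ
  · apply Finset.le_inf'
    intro t ht
    rw [Finset.mem_range] at ht
    have h1 : 0 ≤ ∑ i ∈ Finset.Icc 1 t, θ i * ((w i : ℝ) - (w (i - 1) : ℝ)) := by
      apply Finset.sum_nonneg
      intro i hi
      rw [Finset.mem_Icc] at hi
      have hwi : w (i - 1) < w i := by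
        have h := hmono (i - 1) (by omega)
        rwa [show i - 1 + 1 = i by omega] at h
      have hle : (w (i - 1) : ℝ) ≤ (w i : ℝ) := by exact_mod_cast hwi.le
      have hθi := hθ i hi.1 (by omega)
      nlinarith
    have h2 : 0 ≤ θ (t + 1) * ((w m : ℝ) + 2 * Real.sqrt ((w t : ℝ) * (w m : ℝ))) :=
      mul_nonneg (hθ (t + 1) (by omega) (by omega)) (by positivity)
    linarith
  · intro t ht
    exact Finset.inf'_le _ (Finset.mem_range.mpr ht)
end

section
/- Let W be a symmetric positive semidefinite n×n matrix, c ≥ 0, δ ∈ (0,1), and ℓ ∈ {1,…,n} with w_{ℓℓ} ≤ δ·c. Let y ∈ [0,1]ⁿ satisfy yᵀWy ≤ c, and define z ∈ ℝⁿ by z_i = y_i for i ≠ ℓ and z_ℓ = 1. Then zᵀWz ≤ (1 + δ^{1/3})³ · c. -/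
open Matrix

lemma quadForm_transpose_mul_self {n : ℕ} (A : Matrix (Fin n) (Fin n) ℝ) (x : Fin n → ℝ) :
    quadForm (Aᴴ * A) x = ∑ k, (∑ i, A k i * x i) ^ 2 := by
  have h : ∑ k, (∑ i, A k i * x i) ^ 2
      = ∑ k, ∑ i, ∑ j, (A k i * x i) * (A k j * x j) := by
    refine Finset.sum_congr rfl fun k _ => ?_
    rw [sq, Finset.sum_mul_sum]
  rw [h, Finset.sum_comm]
  unfold quadForm
  refine Finset.sum_congr rfl fun i _ => ?_
  conv_rhs => rw [Finset.sum_comm]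
  refine Finset.sum_congr rfl fun j _ => ?_
  simp only [Matrix.mul_apply, Matrix.conjTranspose_apply, star_trivial, Finset.sum_mul]
  refine Finset.sum_congr rfl fun k _ => ?_
  ring

theorem stmt_11 {n : ℕ} (W : Matrix (Fin n) (Fin n) ℝ) (hpsd : W.PosSemidef)
    (c : ℝ) (hc : 0 ≤ c) (δ : ℝ) (hδ : δ ∈ Set.Ioo (0:ℝ) 1)
    (ℓ : Fin n) (hl : W ℓ ℓ ≤ δ * c)
    (y : Fin n → ℝ) (hy : ∀ i, y i ∈ Set.Icc (0:ℝ) 1) (hfeas : quadForm W y ≤ c)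
    (z : Fin n → ℝ) (hz : ∀ i, z i = if i = ℓ then 1 else y i) :
    quadForm W z ≤ (1 + δ ^ ((1:ℝ) / 3)) ^ 3 * c := by
  obtain ⟨hδ0, hδ1⟩ := hδ
  obtain ⟨A, hA⟩ : ∃ B : Matrix (Fin n) (Fin n) ℝ, W = Bᴴ * B := by
    open scoped MatrixOrder in exact CStarAlgebra.nonneg_iff_eq_star_mul_self.mp hpsd.nonneg
  subst hA
  set t : ℝ := 1 - y ℓ with ht
  have ht0 : 0 ≤ t := by have := (hy ℓ).2; simp [ht]; linarith
  have ht1 : t ≤ 1 := by have := (hy ℓ).1; simp [ht]; linarith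
  set u : Fin n → ℝ := fun k => ∑ i, A k i * y i with hu
  set a : Fin n → ℝ := fun k => A k ℓ with ha
  have hzsum : ∀ k, (∑ i, A k i * z i) = u k + t * a k := by
    intro k
    have key : ∀ i, A k i * z i = A k i * y i + (if i = ℓ then t * a k else 0) := by
      intro i
      rw [hz i]
      by_cases h : i = ℓ
      · subst h; simp [ha, ht]; ring
      · simp [h]
    simp_rw [key, Finset.sum_add_distrib, Finset.sum_ite_eq' Finset.univ,
      Finset.mem_univ, if_true]
    rfl
  set S : ℝ := ∑ k, u k ^ 2 with hS
  set P : ℝ := ∑ k, u k * a k with hP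
  set D : ℝ := ∑ k, a k ^ 2 with hD
  have hSc : S ≤ c := by rw [hS]; rw [quadForm_transpose_mul_self] at hfeas; exact hfeas
  have hS0 : 0 ≤ S := Finset.sum_nonneg fun k _ => sq_nonneg _
  have hD0 : 0 ≤ D := Finset.sum_nonneg fun k _ => sq_nonneg _
  have hDl : D = (Aᴴ * A) ℓ ℓ := by
    rw [hD]
    simp [Matrix.mul_apply, Matrix.conjTranspose_apply, ha, sq]
  have hDc : D ≤ δ * c := hDl ▸ hl
  have hCS : P ^ 2 ≤ S * D := by
    rw [hP, hS, hD]; exact Finset.sum_mul_sq_le_sq_mul_sq _ _ _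
  have hPle : P ≤ Real.sqrt δ * c := by
    have h1 : P ≤ |P| := le_abs_self P
    have h2 : |P| = Real.sqrt (P ^ 2) := (Real.sqrt_sq_eq_abs P).symm
    have h3 : S * D ≤ c * (δ * c) := by
      apply mul_le_mul hSc hDc hD0 hc
    have h4 : Real.sqrt (P ^ 2) ≤ Real.sqrt (c * (δ * c)) :=
      Real.sqrt_le_sqrt (le_trans hCS h3)
    have h5 : Real.sqrt (c * (δ * c)) = Real.sqrt δ * c := by
      rw [show c * (δ * c) = δ * c ^ 2 by ring, Real.sqrt_mul hδ0.le,
        Real.sqrt_sq hc]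
    linarith
  have hQz : quadForm (Aᴴ * A) z = S + 2 * t * P + t ^ 2 * D := by
    rw [quadForm_transpose_mul_self]
    simp_rw [hzsum]
    have expand : ∀ k, (u k + t * a k) ^ 2
        = u k ^ 2 + 2 * t * (u k * a k) + t ^ 2 * a k ^ 2 := fun k => by ring
    simp_rw [expand, Finset.sum_add_distrib, ← Finset.mul_sum]
    rfl
  rw [hQz]
  -- bound the three terms
  have htP : 2 * t * P ≤ 2 * (Real.sqrt δ * c) := by
    have habs : |P| ≤ Real.sqrt δ * c := by
      have h2 : |P| = Real.sqrt (P ^ 2) := (Real.sqrt_sq_eq_abs P).symm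
      have h3 : S * D ≤ c * (δ * c) := mul_le_mul hSc hDc hD0 hc
      have h4 : Real.sqrt (P ^ 2) ≤ Real.sqrt (c * (δ * c)) :=
        Real.sqrt_le_sqrt (le_trans hCS h3)
      have h5 : Real.sqrt (c * (δ * c)) = Real.sqrt δ * c := by
        rw [show c * (δ * c) = δ * c ^ 2 by ring, Real.sqrt_mul hδ0.le,
          Real.sqrt_sq hc]
      linarith
    have : t * P ≤ |P| := by
      calc t * P ≤ t * |P| := by
            apply mul_le_mul_of_nonneg_left (le_abs_self P) ht0
        _ ≤ 1 * |P| := mul_le_mul_of_nonneg_right ht1 (abs_nonneg P)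
        _ = |P| := one_mul _
    linarith
  have htD : t ^ 2 * D ≤ δ * c := by
    have : t ^ 2 ≤ 1 := by nlinarith
    nlinarith
  have hsum : S + 2 * t * P + t ^ 2 * D ≤ c + 2 * (Real.sqrt δ * c) + δ * c := by
    linarith
  refine le_trans hsum ?_
  -- final numeric inequality
  set r : ℝ := δ ^ ((1:ℝ)/3) with hr
  have hr0 : 0 ≤ r := Real.rpow_nonneg hδ0.le _
  have hr3 : r ^ 3 = δ := by
    rw [hr, ← Real.rpow_natCast (δ ^ ((1:ℝ)/3)) 3, ← Real.rpow_mul hδ0.le]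
    norm_num
  have hsr : Real.sqrt δ ≤ r := by
    rw [Real.sqrt_eq_rpow, hr]
    exact Real.rpow_le_rpow_of_exponent_ge hδ0 hδ1.le (by norm_num)
  have hs0 : 0 ≤ Real.sqrt δ := Real.sqrt_nonneg δ
  nlinarith [mul_le_mul_of_nonneg_right hsr hc, sq_nonneg r, mul_nonneg (mul_nonneg hr0 hr0) hc]
end

section
/- Let W be a symmetric n×n matrix with nonnegative entries and diagonal d, c ≥ 0, and let y ∈ [0,1]ⁿ satisfy yᵀWy ≤ c and dᵀy ≤ c. Let α ∈ (0,1) and let X = (X₁,…,X_n) be stochastically independent {0,1}-valued random variables with ℙ[X_i = 1] = α·y_i. Then 𝔼[ XᵀWX ] ≤ (α² + α)·c. -/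
open MeasureTheory ProbabilityTheory

lemma aux01 {Ω : Type*} [MeasurableSpace Ω] (μ : Measure Ω) [IsProbabilityMeasure μ]
    (f : Ω → ℝ) (hf : Measurable f) (h01 : ∀ ω, f ω = 0 ∨ f ω = 1) :
    Integrable f μ ∧ ∫ ω, f ω ∂μ = (μ {ω | f ω = 1}).toReal := by
  have hS : MeasurableSet {ω | f ω = 1} := hf (measurableSet_singleton 1)
  have heq : f = Set.indicator {ω | f ω = 1} (fun _ => (1:ℝ)) := by
    funext ω
    rcases h01 ω with h | h <;> simp [Set.indicator, h]
  constructor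
  · rw [heq]; exact (integrable_const (1:ℝ)).indicator hS
  · rw [heq, integral_indicator_const _ hS]; simp [measureReal_def]

theorem stmt_16 {n : ℕ} (W : Matrix (Fin n) (Fin n) ℝ) (hsym : W.IsSymm)
    (hW : ∀ i j, 0 ≤ W i j) (c : ℝ)
    (y : Fin n → ℝ) (hy : ∀ i, y i ∈ Set.Icc (0:ℝ) 1)
    (h1 : quadForm W y ≤ c) (h2 : (∑ i, W i i * y i) ≤ c)
    (α : ℝ) (hα : α ∈ Set.Ioo (0:ℝ) 1)
    {Ω : Type*} [MeasurableSpace Ω] (μ : Measure Ω) [IsProbabilityMeasure μ]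
    (X : Fin n → Ω → ℝ) (hmeas : ∀ i, Measurable (X i))
    (hindep : iIndepFun X μ)
    (hbin : ∀ i ω, X i ω = 0 ∨ X i ω = 1)
    (hdist : ∀ i, μ {ω | X i ω = 1} = ENNReal.ofReal (α * y i)) :
    ∫ ω, quadForm W (fun i => X i ω) ∂μ ≤ (α ^ 2 + α) * c := by
  have hα0 : (0:ℝ) ≤ α := hα.1.le
  have hint : ∀ i, Integrable (X i) μ := fun i => (aux01 μ (X i) (hmeas i) (hbin i)).1
  have hEX : ∀ i, ∫ ω, X i ω ∂μ = α * y i := by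
    intro i
    rw [(aux01 μ (X i) (hmeas i) (hbin i)).2, hdist i,
      ENNReal.toReal_ofReal (mul_nonneg hα0 (hy i).1)]
  have hprod01 : ∀ i j ω, X i ω * X j ω = 0 ∨ X i ω * X j ω = 1 := by
    intro i j ω
    rcases hbin i ω with h | h <;> rcases hbin j ω with h' | h' <;> simp [h, h']
  have hintprod : ∀ i j, Integrable (fun ω => X i ω * X j ω) μ := fun i j =>
    (aux01 μ _ ((hmeas i).mul (hmeas j)) (hprod01 i j)).1
  have hE : ∀ i j, ∫ ω, X i ω * X j ω ∂μ =
      if i = j then α * y i else α ^ 2 * (y i * y j) := by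
    intro i j
    by_cases h : i = j
    · subst h
      rw [if_pos rfl]
      have hsq : (fun ω => X i ω * X i ω) = fun ω => X i ω := by
        funext ω; rcases hbin i ω with h | h <;> simp [h]
      rw [hsq, hEX i]
    · rw [if_neg h]
      have hind := hindep.indepFun h
      have := IndepFun.integral_mul_eq_mul_integral hind (hint i).1 (hint j).1
      have hmul : ∫ ω, X i ω * X j ω ∂μ = (∫ ω, X i ω ∂μ) * ∫ ω, X j ω ∂μ := this
      rw [hmul, hEX i, hEX j]; ring
  have hswap : ∫ ω, quadForm W (fun i => X i ω) ∂μ =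
      ∑ i, ∑ j, W i j * (∫ ω, X i ω * X j ω ∂μ) := by
    unfold quadForm
    rw [integral_finset_sum]
    · refine Finset.sum_congr rfl fun i _ => ?_
      rw [integral_finset_sum]
      · refine Finset.sum_congr rfl fun j _ => ?_
        have hrw : (fun ω => W i j * X i ω * X j ω)
            = fun ω => W i j * (X i ω * X j ω) := by funext ω; ring
        rw [hrw, integral_const_mul]
      · intro j _
        have := (hintprod i j).const_mul (W i j)
        simpa [mul_assoc] using this
    · intro i _
      refine integrable_finset_sum _ fun j _ => ?_
      have := (hintprod i j).const_mul (W i j)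
      simpa [mul_assoc] using this
  rw [hswap]
  simp_rw [hE]
  have hsplit : ∀ i j : Fin n, W i j * (if i = j then α * y i else α ^ 2 * (y i * y j))
      = α ^ 2 * (W i j * y i * y j)
        + (if i = j then W i i * (α * y i - α ^ 2 * (y i * y i)) else 0) := by
    intro i j
    by_cases h : i = j <;> simp only [h, if_true, if_false, reduceIte] <;> ring
  calc (∑ i, ∑ j, W i j * (if i = j then α * y i else α ^ 2 * (y i * y j)))
      = α ^ 2 * quadForm W y + ∑ i, W i i * (α * y i - α ^ 2 * (y i * y i)) := by
        simp_rw [hsplit, Finset.sum_add_distrib, Finset.sum_ite_eq, Finset.mem_univ,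
          if_true, ← Finset.mul_sum]
        rfl
    _ ≤ α ^ 2 * c + α * c := by
        gcongr ?_ + ?_
        · exact mul_le_mul_of_nonneg_left h1 (by positivity)
        · calc ∑ i, W i i * (α * y i - α ^ 2 * (y i * y i))
              ≤ ∑ i, W i i * (α * y i) := by
                refine Finset.sum_le_sum fun i _ => ?_
                refine mul_le_mul_of_nonneg_left ?_ (hW i i)
                nlinarith [sq_nonneg (y i), (hy i).1]
            _ = α * ∑ i, W i i * y i := by rw [Finset.mul_sum]; exact Finset.sum_congr rfl fun i _ => by ring
            _ ≤ α * c := mul_le_mul_of_nonneg_left h2 hα0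
    _ = (α ^ 2 + α) * c := by ring
end

section
/- Let r ≥ 1, and for each k ∈ {1,…,r} let W^k be a symmetric n×n matrix with nonnegative entries and diagonal d^k, and let c^k > 0. Let y ∈ [0,1]ⁿ satisfy yᵀW^k y ≤ c^k and (d^k)ᵀy ≤ c^k for all k, let α ∈ (0,1), and let X = (X₁,…,X_n) be stochastically independent {0,1}-valued random variables with ℙ[X_i = 1] = α·y_i. Then ℙ[ XᵀW^k X > c^k for some k ∈ {1,…,r} ] ≤ r·(α² + α). Moreover, for α₀ = 1/(2(r+1)) one has r·(α₀² + α₀) ≤ 1/2, and consequently for every δ ∈ (0,1) and α_δ = (1−δ)/((r+1)(1−δ+(1+δ^{1/3})³)) ≤ α₀, one has ℙ[X infeasible] ≤ r·(α_δ² + α_δ) ≤ 1/2. -/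
open MeasureTheory ProbabilityTheory

/-- `α_δ = (1−δ) / ((r+1)·(1 − δ + (1 + δ^{1/3})³))`. -/
noncomputable def alphaDelta (r : ℕ) (δ : ℝ) : ℝ :=
  (1 - δ) / (((r : ℝ) + 1) * (1 - δ + (1 + δ ^ ((1:ℝ) / 3)) ^ 3))

private lemma arith1 (R : ℝ) (hR : 1 ≤ R) :
    R * ((1 / (2 * (R + 1))) ^ 2 + 1 / (2 * (R + 1))) ≤ 1 / 2 := by
  have h : (0:ℝ) < R + 1 := by linarith
  set t := 1 / (2 * (R + 1)) with htdef
  have ht : t * (2 * (R + 1)) = 1 := by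
    rw [htdef]; field_simp
  have ht' : 0 < t := by rw [htdef]; positivity
  nlinarith [ht, ht', sq_nonneg t, mul_pos ht' ht', hR]

private lemma arith2 (R a : ℝ) (hR : 1 ≤ R) (ha : 0 ≤ a) (hat : a ≤ 1 / (2 * (R + 1))) :
    R * (a ^ 2 + a) ≤ 1 / 2 := by
  have key := arith1 R hR
  have h : (0:ℝ) < R + 1 := by linarith
  set t := 1 / (2 * (R + 1)) with htdef
  have ht' : 0 < t := by rw [htdef]; positivity
  have hprod : 0 ≤ R * (t - a) * (t + a + 1) := by
    apply mul_nonneg (mul_nonneg (by linarith) (by linarith)) (by linarith)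
  nlinarith [key, hprod]

theorem stmt_17 {n : ℕ} (r : ℕ) (hr : 1 ≤ r)
    (W : Fin r → Matrix (Fin n) (Fin n) ℝ) (hsym : ∀ k, (W k).IsSymm)
    (hW : ∀ k i j, 0 ≤ W k i j) (c : Fin r → ℝ) (hc : ∀ k, 0 < c k)
    (y : Fin n → ℝ) (hy : ∀ i, y i ∈ Set.Icc (0:ℝ) 1)
    (h1 : ∀ k, quadForm (W k) y ≤ c k) (h2 : ∀ k, (∑ i, W k i i * y i) ≤ c k)
    (α : ℝ) (hα : α ∈ Set.Ioo (0:ℝ) 1)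
    {Ω : Type*} [MeasurableSpace Ω] (μ : Measure Ω) [IsProbabilityMeasure μ]
    (X : Fin n → Ω → ℝ) (hmeas : ∀ i, Measurable (X i))
    (hindep : iIndepFun X μ)
    (hbin : ∀ i ω, X i ω = 0 ∨ X i ω = 1)
    (hdist : ∀ i, μ {ω | X i ω = 1} = ENNReal.ofReal (α * y i)) :
    μ {ω | ∃ k, c k < quadForm (W k) (fun i => X i ω)} ≤
        ENNReal.ofReal ((r : ℝ) * (α ^ 2 + α)) ∧
    (r : ℝ) * ((1 / (2 * ((r : ℝ) + 1))) ^ 2 + 1 / (2 * ((r : ℝ) + 1))) ≤ 1 / 2 ∧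
    (∀ δ ∈ Set.Ioo (0:ℝ) 1,
      alphaDelta r δ ≤ 1 / (2 * ((r : ℝ) + 1)) ∧
      (r : ℝ) * ((alphaDelta r δ) ^ 2 + alphaDelta r δ) ≤ 1 / 2 ∧
      (α = alphaDelta r δ →
        μ {ω | ∃ k, c k < quadForm (W k) (fun i => X i ω)} ≤ ENNReal.ofReal (1 / 2))) := by
  obtain ⟨hα0, hα1⟩ := hα
  have hR : (1:ℝ) ≤ (r:ℝ) := by exact_mod_cast hr
  -- basic facts about X
  have hX01 : ∀ i ω, 0 ≤ X i ω ∧ X i ω ≤ 1 := by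
    intro i ω; rcases hbin i ω with h | h <;> simp [h]
  have hintX : ∀ i, Integrable (X i) μ := by
    intro i
    refine ⟨(hmeas i).aestronglyMeasurable, HasFiniteIntegral.of_bounded (C := 1) ?_⟩
    filter_upwards with ω
    rw [Real.norm_eq_abs, abs_le]
    exact ⟨by linarith [(hX01 i ω).1], (hX01 i ω).2⟩
  have hintXX : ∀ i j, Integrable (fun ω => X i ω * X j ω) μ := by
    intro i j
    refine ⟨((hmeas i).mul (hmeas j)).aestronglyMeasurable,
      HasFiniteIntegral.of_bounded (C := 1) ?_⟩
    filter_upwards with ω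
    rw [Real.norm_eq_abs, abs_le]
    constructor
    · nlinarith [(hX01 i ω).1, (hX01 j ω).1]
    · nlinarith [(hX01 i ω).1, (hX01 i ω).2, (hX01 j ω).1, (hX01 j ω).2]
  have hEX : ∀ i, ∫ ω, X i ω ∂μ = α * y i := by
    intro i
    have hs : MeasurableSet {ω | X i ω = 1} := (hmeas i) (measurableSet_singleton 1)
    have hrepr : (fun ω => X i ω) = fun ω => Set.indicator {ω | X i ω = 1} (fun _ => (1:ℝ)) ω := by
      funext ω
      rcases hbin i ω with h | h
      · simp [Set.indicator, h]
      · simp [Set.indicator, h]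
    rw [hrepr, integral_indicator_const (1:ℝ) hs, measureReal_def, hdist i, smul_eq_mul, mul_one,
      ENNReal.toReal_ofReal (by nlinarith [(hy i).1])]
  have hEXX : ∀ i j, i ≠ j → ∫ ω, X i ω * X j ω ∂μ = (α * y i) * (α * y j) := by
    intro i j hij
    have := (hindep.indepFun hij).integral_mul_eq_mul_integral (hmeas i).aestronglyMeasurable
      (hmeas j).aestronglyMeasurable
    rw [← hEX i, ← hEX j, ← this]
    rfl
  -- key expectation bound for each k
  have hExp : ∀ k, ∫ ω, quadForm (W k) (fun i => X i ω) ∂μ ≤ (α ^ 2 + α) * c k := by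
    intro k
    have hint_inner : ∀ i (j : Fin n), Integrable (fun ω => W k i j * X i ω * X j ω) μ := by
      intro i j
      simpa [mul_assoc] using (hintXX i j).const_mul (W k i j)
    have hint_row : ∀ i : Fin n, Integrable (fun ω => ∑ j, W k i j * X i ω * X j ω) μ :=
      fun i => integrable_finset_sum _ (fun j _ => hint_inner i j)
    have hEq : ∫ ω, quadForm (W k) (fun i => X i ω) ∂μ
        = ∑ i, ∑ j, W k i j * ∫ ω, X i ω * X j ω ∂μ := by
      simp only [quadForm]
      rw [integral_finset_sum _ (fun i _ => hint_row i)]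
      refine Finset.sum_congr rfl fun i _ => ?_
      rw [integral_finset_sum _ (fun j _ => hint_inner i j)]
      refine Finset.sum_congr rfl fun j _ => ?_
      simp_rw [mul_assoc]
      exact integral_const_mul _ _
    rw [hEq]
    have hbound : ∀ i j : Fin n, W k i j * ∫ ω, X i ω * X j ω ∂μ ≤
        α ^ 2 * (W k i j * y i * y j) + (if i = j then α * (W k i i * y i) else 0) := by
      intro i j
      by_cases h : i = j
      · subst h
        simp only [eq_self_iff_true, if_true]
        have hXX : (fun ω => X i ω * X i ω) = fun ω => X i ω := by
          funext ω; rcases hbin i ω with h | h <;> simp [h]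
        rw [hXX, hEX i]
        have h1 := (hy i).1
        have h2 := hW k i i
        nlinarith [sq_nonneg (α * y i), mul_nonneg h2 (mul_nonneg (mul_nonneg (sq_nonneg α) h1) h1)]
      · rw [if_neg h, hEXX i j h, add_zero]
        apply le_of_eq; ring
    calc ∑ i, ∑ j, W k i j * ∫ ω, X i ω * X j ω ∂μ
        ≤ ∑ i, ∑ j, (α ^ 2 * (W k i j * y i * y j) + (if i = j then α * (W k i i * y i) else 0)) :=
          Finset.sum_le_sum fun i _ => Finset.sum_le_sum fun j _ => hbound i j
      _ = α ^ 2 * quadForm (W k) y + α * ∑ i, W k i i * y i := by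
          simp only [Finset.sum_add_distrib]
          congr 1
          · rw [quadForm]
            simp only [Finset.mul_sum]
          · rw [Finset.mul_sum]
            refine Finset.sum_congr rfl fun i _ => ?_
            simp
      _ ≤ α ^ 2 * c k + α * c k := by
          have := h1 k; have := h2 k
          have hck := (hc k).le
          gcongr <;> positivity
      _ = (α ^ 2 + α) * c k := by ring
  -- Markov + union bound
  have hfmeas : ∀ k, Measurable (fun ω => quadForm (W k) (fun i => X i ω)) := by
    intro k
    unfold quadForm
    exact Finset.measurable_sum _ fun i _ => Finset.measurable_sum _ fun j _ =>
      (((hmeas i).const_mul _).mul (hmeas j))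
  have hfnn : ∀ k ω, 0 ≤ quadForm (W k) (fun i => X i ω) := by
    intro k ω
    refine Finset.sum_nonneg fun i _ => Finset.sum_nonneg fun j _ => ?_
    exact mul_nonneg (mul_nonneg (hW k i j) (hX01 i ω).1) (hX01 j ω).1
  have hfint : ∀ k, Integrable (fun ω => quadForm (W k) (fun i => X i ω)) μ := by
    intro k
    unfold quadForm
    refine integrable_finset_sum _ fun i _ => integrable_finset_sum _ fun j _ => ?_
    simpa [mul_assoc] using (hintXX i j).const_mul (W k i j)
  have hMarkov : ∀ k, μ {ω | c k < quadForm (W k) (fun i => X i ω)} ≤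
      ENNReal.ofReal (α ^ 2 + α) := by
    intro k
    have hsub : {ω | c k < quadForm (W k) (fun i => X i ω)} ⊆
        {ω | ENNReal.ofReal (c k) ≤ ENNReal.ofReal (quadForm (W k) (fun i => X i ω))} := by
      intro ω hω
      exact ENNReal.ofReal_le_ofReal (le_of_lt hω)
    calc μ {ω | c k < quadForm (W k) (fun i => X i ω)}
        ≤ μ {ω | ENNReal.ofReal (c k) ≤ ENNReal.ofReal (quadForm (W k) (fun i => X i ω))} :=
          measure_mono hsub
      _ ≤ (∫⁻ ω, ENNReal.ofReal (quadForm (W k) (fun i => X i ω)) ∂μ) / ENNReal.ofReal (c k) :=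
          meas_ge_le_lintegral_div ((hfmeas k).ennreal_ofReal.aemeasurable)
            (by simp [ENNReal.ofReal_eq_zero, not_le, hc k]) ENNReal.ofReal_ne_top
      _ = ENNReal.ofReal (∫ ω, quadForm (W k) (fun i => X i ω) ∂μ) / ENNReal.ofReal (c k) := by
          rw [ofReal_integral_eq_lintegral_ofReal (hfint k)
            (Filter.Eventually.of_forall (hfnn k))]
      _ = ENNReal.ofReal ((∫ ω, quadForm (W k) (fun i => X i ω) ∂μ) / c k) := by
          rw [ENNReal.ofReal_div_of_pos (hc k)]
      _ ≤ ENNReal.ofReal (α ^ 2 + α) := by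
          apply ENNReal.ofReal_le_ofReal
          rw [div_le_iff₀ (hc k)]
          exact hExp k
  have hmain : μ {ω | ∃ k, c k < quadForm (W k) (fun i => X i ω)} ≤
      ENNReal.ofReal ((r : ℝ) * (α ^ 2 + α)) := by
    have hset : {ω | ∃ k, c k < quadForm (W k) (fun i => X i ω)} =
        ⋃ k, {ω | c k < quadForm (W k) (fun i => X i ω)} := by
      ext ω; simp
    rw [hset]
    calc μ (⋃ k, {ω | c k < quadForm (W k) (fun i => X i ω)})
        ≤ ∑' k, μ {ω | c k < quadForm (W k) (fun i => X i ω)} := measure_iUnion_le _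
      _ ≤ ∑' _ : Fin r, ENNReal.ofReal (α ^ 2 + α) := ENNReal.tsum_le_tsum fun k => hMarkov k
      _ = (r : ℕ) * ENNReal.ofReal (α ^ 2 + α) := by
          rw [tsum_fintype]; simp [Finset.sum_const, mul_comm]
      _ = ENNReal.ofReal ((r : ℝ) * (α ^ 2 + α)) := by
          rw [ENNReal.ofReal_mul (by positivity)]
          congr 1
          simp [ENNReal.ofReal_natCast]
  refine ⟨hmain, arith1 _ hR, fun δ hδ => ?_⟩
  obtain ⟨hδ0, hδ1⟩ := hδ
  have ht0 : 0 ≤ δ ^ ((1:ℝ)/3) := Real.rpow_nonneg hδ0.le _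
  have hcube : (1:ℝ) ≤ (1 + δ ^ ((1:ℝ)/3)) ^ 3 := one_le_pow₀ (by linarith)
  have hD : (0:ℝ) < 1 - δ + (1 + δ ^ ((1:ℝ)/3)) ^ 3 := by linarith
  have hRp : (0:ℝ) < (r:ℝ) + 1 := by linarith
  have hle : alphaDelta r δ ≤ 1 / (2 * ((r : ℝ) + 1)) := by
    unfold alphaDelta
    rw [div_le_div_iff₀ (by positivity) (by positivity)]
    nlinarith
  have hnn : 0 ≤ alphaDelta r δ := by
    unfold alphaDelta
    exact div_nonneg (by linarith) (mul_pos hRp hD).le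
  have hhalf : (r : ℝ) * ((alphaDelta r δ) ^ 2 + alphaDelta r δ) ≤ 1 / 2 :=
    arith2 _ _ hR hnn hle
  refine ⟨hle, hhalf, fun hαeq => ?_⟩
  refine hmain.trans (ENNReal.ofReal_le_ofReal ?_)
  rw [hαeq]
  exact hhalf
end

section
/- Let S₁, …, S_n be subsets of {1,…,m}, each of cardinality 6, and let k ∈ ℕ. (a) For every x ∈ {0,1}ⁿ the quadratic form identity ∑_{i=1}^m ( ∑_{j : i ∈ S_j} x_j )² = xᵀ(AᵀA)x holds, where A ∈ {0,1}^{m×n} is the incidence matrix with a_{ij} = 1 iff i ∈ S_j. (b) If there exist k indices j₁ < ⋯ < j_k such that the sets S_{j₁}, …, S_{j_k} are pairwise disjoint, then max{ ∑_{j=1}^n x_j : x ∈ {0,1}ⁿ, ∑_{i=1}^m (∑_{j : i ∈ S_j} x_j)² ≤ 6k } = k. -/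
open Matrix

lemma sum01_card {n : ℕ} (F : Finset (Fin n)) (x : Fin n → ℝ)
    (h01 : ∀ j, x j = 0 ∨ x j = 1) :
    ∑ j ∈ F, x j = ((F.filter (fun j => x j = 1)).card : ℝ) := by
  rw [Finset.card_filter]
  push_cast
  apply Finset.sum_congr rfl
  intro j _
  rcases h01 j with h | h <;> simp [h]

lemma swap_sum {m n : ℕ} (S : Fin n → Finset (Fin m)) (hcard : ∀ j, (S j).card = 6)
    (x : Fin n → ℝ) :
    ∑ i, ∑ j ∈ Finset.univ.filter (fun j => i ∈ S j), x j = 6 * ∑ j, x j := by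
  have : ∀ i : Fin m, ∑ j ∈ Finset.univ.filter (fun j => i ∈ S j), x j
      = ∑ j, if i ∈ S j then x j else 0 := by
    intro i; rw [Finset.sum_filter]
  simp_rw [this]
  rw [Finset.sum_comm]
  have : ∀ j : Fin n, ∑ i, (if i ∈ S j then x j else 0) = 6 * x j := by
    intro j
    rw [Finset.sum_ite_mem, Finset.univ_inter, Finset.sum_const, hcard]
    simp [mul_comm]
  simp_rw [this, ← Finset.mul_sum]

theorem stmt_19 {m n : ℕ} (S : Fin n → Finset (Fin m)) (hcard : ∀ j, (S j).card = 6)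
    (k : ℕ)
    (A : Matrix (Fin m) (Fin n) ℝ) (hA : ∀ i j, A i j = if i ∈ S j then 1 else 0) :
    (∀ x : Fin n → ℝ, (∀ j, x j = 0 ∨ x j = 1) →
      (∑ i, (∑ j ∈ Finset.univ.filter (fun j => i ∈ S j), x j) ^ 2) =
        quadForm (Aᵀ * A) x) ∧
    ((∃ T : Finset (Fin n), T.card = k ∧
        ∀ a ∈ T, ∀ b ∈ T, a ≠ b → Disjoint (S a) (S b)) →
      IsGreatest {v : ℝ | ∃ x : Fin n → ℝ, (∀ j, x j = 0 ∨ x j = 1) ∧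
        (∑ i, (∑ j ∈ Finset.univ.filter (fun j => i ∈ S j), x j) ^ 2) ≤ 6 * (k : ℝ) ∧
        v = ∑ j, x j} (k : ℝ)) := by
  constructor
  · intro x _
    have h1 : ∀ i : Fin m, ∑ j ∈ Finset.univ.filter (fun j => i ∈ S j), x j
        = ∑ j, A i j * x j := by
      intro i
      rw [Finset.sum_filter]
      exact Finset.sum_congr rfl fun j _ => by rw [hA]; split <;> simp
    simp_rw [h1, quadForm, Matrix.mul_apply, Matrix.transpose_apply, sq,
      Finset.sum_mul, Finset.mul_sum]
    rw [Finset.sum_comm]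
    apply Finset.sum_congr rfl; intro a _
    rw [Finset.sum_comm]
    apply Finset.sum_congr rfl; intro b _
    apply Finset.sum_congr rfl; intro i _
    ring
  · rintro ⟨T, hT, hdisj⟩
    constructor
    · -- membership: x = indicator of T
      refine ⟨fun j => if j ∈ T then 1 else 0, fun j => by by_cases h : j ∈ T <;> simp [h], ?_, ?_⟩
      · have key : ∀ i : Fin m,
            (∑ j ∈ Finset.univ.filter (fun j => i ∈ S j), if j ∈ T then (1:ℝ) else 0) ^ 2
            ≤ ∑ j ∈ Finset.univ.filter (fun j => i ∈ S j), if j ∈ T then (1:ℝ) else 0 := by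
          intro i
          have hsum : (∑ j ∈ Finset.univ.filter (fun j => i ∈ S j), if j ∈ T then (1:ℝ) else 0)
              = ((T.filter (fun j => i ∈ S j)).card : ℝ) := by
            have he : Finset.univ.filter (fun j => i ∈ S j) ∩ T
                = T.filter (fun j => i ∈ S j) := by ext a; simp [and_comm]
            rw [Finset.sum_ite_mem, he, Finset.sum_const, nsmul_eq_mul, mul_one]
          have hle : (T.filter (fun j => i ∈ S j)).card ≤ 1 := by
            rw [Finset.card_le_one]
            intro a ha b hb
            simp only [Finset.mem_filter] at ha hb
            by_contra hne
            exact Finset.disjoint_left.mp (hdisj a ha.1 b hb.1 hne) ha.2 hb.2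
          rw [hsum]
          interval_cases h : (T.filter (fun j => i ∈ S j)).card <;> norm_num
        calc ∑ i, (∑ j ∈ Finset.univ.filter (fun j => i ∈ S j),
                if j ∈ T then (1:ℝ) else 0) ^ 2
            ≤ ∑ i, ∑ j ∈ Finset.univ.filter (fun j => i ∈ S j),
                if j ∈ T then (1:ℝ) else 0 := Finset.sum_le_sum fun i _ => key i
          _ = 6 * ∑ j, if j ∈ T then (1:ℝ) else 0 := swap_sum S hcard _
          _ = 6 * k := by rw [Finset.sum_ite_mem, Finset.univ_inter, Finset.sum_const, hT]; simp
      · rw [Finset.sum_ite_mem, Finset.univ_inter, Finset.sum_const, hT]; simp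
    · -- upper bound
      rintro v ⟨x, h01, hquad, rfl⟩
      have key : ∀ i : Fin m,
          ∑ j ∈ Finset.univ.filter (fun j => i ∈ S j), x j
          ≤ (∑ j ∈ Finset.univ.filter (fun j => i ∈ S j), x j) ^ 2 := by
        intro i
        rw [sum01_card _ _ h01]
        have : ∀ N : ℕ, (N : ℝ) ≤ (N : ℝ) ^ 2 := by
          intro N
          have : N ≤ N ^ 2 := Nat.le_self_pow (by norm_num) N
          exact_mod_cast this
        exact this _
      have h6 : 6 * ∑ j, x j ≤ 6 * (k : ℝ) := by
        calc 6 * ∑ j, x j = ∑ i, ∑ j ∈ Finset.univ.filter (fun j => i ∈ S j), x j :=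
              (swap_sum S hcard x).symm
          _ ≤ ∑ i, (∑ j ∈ Finset.univ.filter (fun j => i ∈ S j), x j) ^ 2 :=
              Finset.sum_le_sum fun i _ => key i
          _ ≤ 6 * k := hquad
      linarith
end
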